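/- arXiv:1309.4161 — 5 statements merged into one kernel-verified Lean document; each statement's English description precedes it below -/
import Mathlib

section
/- Suppose the underlying network G is a tree. Then for any node v ∈ V, the most likely elapsed time is d̄(v, V_e), and a most likely infection path for v (maximizing P_v jointly over all feasible elapsed times t ∈ 𝒯_v and all consistent infection paths) is the latest infection path for (v, d̄(v, V_e)). -/
open scoped Classical

namespace SILimited

/-- The possible states of a node in the discrete-time SI model with limited observations:
susceptible, non-susceptible, infected (non-explicit), and explicit. -/
inductive NodeState : Type
  | susceptible : NodeState
  | nonsusceptible : NodeState
  | infected : NodeState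
  | explicitN : NodeState
  deriving DecidableEq

/-- A node state counts as infected if it is infected (non-explicit) or explicit. -/
def NodeState.IsInfected : NodeState → Prop
  | .infected => True
  | .explicitN => True
  | _ => False

variable {V : Type*}

/-- One-time-slot transition probability of a single node `u` with explicit probability `qu`,
infection probability `p`: a susceptible node stays susceptible w.p. `1 - p`, becomes infected
non-explicit w.p. `p * (1 - qu)`, becomes explicit w.p. `p * qu`; infected (resp. explicit)
nodes stay infected (resp. explicit), and non-susceptible nodes remain uninfected w.p. one. -/
def transProb (p qu : ℝ) : NodeState → NodeState → ℝ
  | .susceptible, .susceptible => 1 - p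
  | .susceptible, .infected => p * (1 - qu)
  | .susceptible, .explicitN => p * qu
  | .nonsusceptible, .nonsusceptible => 1
  | .nonsusceptible, .susceptible => 1
  | .infected, .infected => 1
  | .explicitN, .explicitN => 1
  | _, _ => 0

/-- Probability `P_v(X^t)` of an infection path `X` over elapsed time `t` given source `v`:
the product over nodes and time slots of the one-slot transition probabilities, together with
the factor for whether the source is explicit or not. -/
noncomputable def pathProb (p : ℝ) (q : V → ℝ) (v : V) (t : ℕ) (X : V → ℕ → NodeState) : ℝ :=
  (if X v 0 = .explicitN then q v else 1 - q v) *
    ∏ᶠ u : V, ∏ τ ∈ Finset.range t, transProb p (q u) (X u τ) (X u (τ + 1))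

/-- `X` is a valid infection path over times `0, 1, …, t` for the SI dynamics on `G`
with (single) infection source `v`. -/
structure IsInfectionPath (G : SimpleGraph V) (v : V) (t : ℕ) (X : V → ℕ → NodeState) : Prop where
  source_infected : (X v 0).IsInfected
  init_uninfected : ∀ u, u ≠ v → ¬ (X u 0).IsInfected
  susceptible_iff : ∀ u, ∀ τ ≤ t, ¬ (X u τ).IsInfected →
    (X u τ = .susceptible ↔ ∃ w, G.Adj u w ∧ (X w τ).IsInfected)
  infected_stays : ∀ u, ∀ τ, τ < t → X u τ = .infected → X u (τ + 1) = .infected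
  explicit_stays : ∀ u, ∀ τ, τ < t → X u τ = .explicitN → X u (τ + 1) = .explicitN
  infect_from_susceptible : ∀ u, ∀ τ, τ < t → (X u (τ + 1)).IsInfected →
    (X u τ).IsInfected ∨ X u τ = .susceptible

/-- An infection path `X^t` is consistent with the observed explicit set `Ve` if the nodes
explicit at time `t` are exactly those of `Ve`. -/
def ConsistentWith (Ve : Set V) (t : ℕ) (X : V → ℕ → NodeState) : Prop :=
  ∀ u, X u t = .explicitN ↔ u ∈ Ve

/-- The set `𝒳_v` of infection paths with source `v` and elapsed time `t` consistent with `Ve`. -/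
def pathsFor (G : SimpleGraph V) (Ve : Set V) (v : V) (t : ℕ) : Set (V → ℕ → NodeState) :=
  {X | IsInfectionPath G v t X ∧ ConsistentWith Ve t X}

/-- The set `𝒯_v` of feasible elapsed times for source `v`. -/
def feasibleTimes (G : SimpleGraph V) (Ve : Set V) (v : V) : Set ℕ :=
  {t | (pathsFor G Ve v t).Nonempty}

/-- `X` is a most likely infection path for `(v, t)`: it is a consistent infection path and
maximizes `P_v` over `𝒳_v` at elapsed time `t`. -/
def IsMostLikely (G : SimpleGraph V) (p : ℝ) (q : V → ℝ) (Ve : Set V) (v : V) (t : ℕ)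
    (X : V → ℕ → NodeState) : Prop :=
  X ∈ pathsFor G Ve v t ∧ ∀ Y ∈ pathsFor G Ve v t, pathProb p q v t Y ≤ pathProb p q v t X

/-- `d̄(v, A) = max_{u ∈ A} d(v, u)`. -/
noncomputable def dbar (G : SimpleGraph V) (v : V) (A : Set V) : ℕ :=
  sSup (G.dist v '' A)

/-- Vertex set of the subtree `T_u(v;G)` rooted at `u` with the first edge of the path from
`u` to `v` removed: in a tree these are the vertices `w` whose path from `v` passes through `u`. -/
def subtreeAway (G : SimpleGraph V) (u v : V) : Set V :=
  {w | G.dist v w = G.dist v u + G.dist u w}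

/-- Vertex set of the minimal connected subtree of the tree `G` spanning `S`: the vertices
lying on a path between two vertices of `S`. -/
def spanVerts (G : SimpleGraph V) (S : Set V) : Set V :=
  {w | ∃ a ∈ S, ∃ b ∈ S, G.dist a b = G.dist a w + G.dist w b}

/-- The first infection time of node `u` in the infection path `X`. -/
noncomputable def firstInfection (X : V → ℕ → NodeState) (u : V) : ℕ :=
  sInf {τ | (X u τ).IsInfected}

/-- The latest infection path for `(v, t)`: a consistent infection path in which every node
outside the minimal connected subtree `H` spanning `Ve ∪ {v}` remains uninfected for all
`τ ≤ t`, and every `u ∈ H \ {v}` first becomes infected at time `t - d̄(u, T_u(v;H))`. -/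
def IsLatestPath (G : SimpleGraph V) (Ve : Set V) (v : V) (t : ℕ)
    (X : V → ℕ → NodeState) : Prop :=
  IsInfectionPath G v t X ∧ ConsistentWith Ve t X ∧
  (∀ u, u ∉ spanVerts G (Ve ∪ {v}) → ∀ τ ≤ t, ¬ (X u τ).IsInfected) ∧
  (∀ u ∈ spanVerts G (Ve ∪ {v}), u ≠ v →
    firstInfection X u = t - dbar G u (subtreeAway G u v ∩ spanVerts G (Ve ∪ {v})))

end SILimited

section TreeToolkit


namespace TreeAux

open SimpleGraph

variable {V : Type*} {G : SimpleGraph V}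

/-- `x` lies between `a` and `b` (metrically). -/
def TBtw (G : SimpleGraph V) (a x b : V) : Prop :=
  G.dist a x + G.dist x b = G.dist a b

lemma dc (G : SimpleGraph V) (a b : V) : G.dist a b = G.dist b a := SimpleGraph.dist_comm

lemma btw_self_left (a b : V) : TBtw G a a b := by simp [TBtw]

lemma btw_self_right (a b : V) : TBtw G a b b := by simp [TBtw]

lemma TBtw.symm {a x b : V} (h : TBtw G a x b) : TBtw G b x a := by
  unfold TBtw at *
  rw [dc G b x, dc G x a, dc G b a]
  omega

/-- Two walks that are both paths between the same endpoints in an acyclic graph are equal. -/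
lemma walk_unique (ha : G.IsAcyclic) {a b : V} {P Q : G.Walk a b}
    (hP : P.IsPath) (hQ : Q.IsPath) : P = Q := by
  have := ha.path_unique ⟨P, hP⟩ ⟨Q, hQ⟩
  exact congrArg Subtype.val this

lemma takeUntil_length_eq (hc : G.Connected) {a b x : V} (P : G.Walk a b)
    (hP : P.length = G.dist a b) (hx : x ∈ P.support) :
    (P.takeUntil x hx).length = G.dist a x ∧ (P.dropUntil x hx).length = G.dist x b := by
  have hsplit := P.take_spec hx
  have hlen : (P.takeUntil x hx).length + (P.dropUntil x hx).length = P.length := by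
    conv_rhs => rw [← hsplit]
    rw [SimpleGraph.Walk.length_append]
  have h1 : G.dist a x ≤ (P.takeUntil x hx).length := SimpleGraph.dist_le _
  have h2 : G.dist x b ≤ (P.dropUntil x hx).length := SimpleGraph.dist_le _
  have h3 : G.dist a b ≤ G.dist a x + G.dist x b := hc.dist_triangle
  omega

/-- Membership in a geodesic walk is betweenness. -/
lemma mem_support_iff_btw (hc : G.Connected) (ha : G.IsAcyclic) {a b x : V}
    (P : G.Walk a b) (hP : P.length = G.dist a b) :
    x ∈ P.support ↔ TBtw G a x b := by
  constructor
  · intro hx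
    have := takeUntil_length_eq hc P hP hx
    have h3 : G.dist a b ≤ G.dist a x + G.dist x b := hc.dist_triangle
    have hlen : (P.takeUntil x hx).length + (P.dropUntil x hx).length = P.length := by
      conv_rhs => rw [← P.take_spec hx]
      rw [SimpleGraph.Walk.length_append]
    unfold TBtw
    omega
  · intro hbtw
    obtain ⟨P1, hP1⟩ := (hc a x).exists_walk_length_eq_dist
    obtain ⟨P2, hP2⟩ := (hc x b).exists_walk_length_eq_dist
    have hW : (P1.append P2).length = G.dist a b := by
      rw [SimpleGraph.Walk.length_append, hP1, hP2]; exact hbtw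
    have hWp : (P1.append P2).IsPath := SimpleGraph.Walk.isPath_of_length_eq_dist _ hW
    have hPp : P.IsPath := SimpleGraph.Walk.isPath_of_length_eq_dist _ hP
    have heq : P1.append P2 = P := walk_unique ha hWp hPp
    rw [← heq]
    rw [SimpleGraph.Walk.mem_support_append_iff]
    exact Or.inl (SimpleGraph.Walk.end_mem_support P1)

/-- Splitting lemma: if `x` is between `a` and `b`, then for any `v`,
`x` is between `v` and `a` or between `v` and `b`. -/
lemma btw_split (hc : G.Connected) (ha : G.IsAcyclic) {a b x : V}
    (h : TBtw G a x b) (v : V) : TBtw G v x a ∨ TBtw G v x b := by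
  obtain ⟨P1, hP1⟩ := (hc a v).exists_walk_length_eq_dist
  obtain ⟨P2, hP2⟩ := (hc v b).exists_walk_length_eq_dist
  obtain ⟨Q, hQ⟩ := (hc a b).exists_walk_length_eq_dist
  have hx : x ∈ Q.support := (mem_support_iff_btw hc ha Q hQ).2 h
  have hQp : Q.IsPath := SimpleGraph.Walk.isPath_of_length_eq_dist _ hQ
  have hB : (P1.append P2).bypass.IsPath := SimpleGraph.Walk.bypass_isPath _
  have heq : Q = (P1.append P2).bypass := walk_unique ha hQp hB
  have hmem : x ∈ (P1.append P2).support := by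
    apply SimpleGraph.Walk.support_bypass_subset
    rw [← heq]; exact hx
  rw [SimpleGraph.Walk.mem_support_append_iff] at hmem
  rcases hmem with h1 | h2
  · left
    exact ((mem_support_iff_btw hc ha P1 hP1).1 h1).symm
  · right
    exact (mem_support_iff_btw hc ha P2 hP2).1 h2

/-- Two points between `v` and `w` are comparable: the closer one is between `v`
and the farther one. -/
lemma btw_order (hc : G.Connected) (ha : G.IsAcyclic) {v w x y : V}
    (hx : TBtw G v x w) (hy : TBtw G v y w) (hd : G.dist v x ≤ G.dist v y) :
    TBtw G v x y := by
  obtain ⟨P, hP⟩ := (hc v w).exists_walk_length_eq_dist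
  have hxs : x ∈ P.support := (mem_support_iff_btw hc ha P hP).2 hx
  have hys : y ∈ P.support := (mem_support_iff_btw hc ha P hP).2 hy
  have hsplit := P.take_spec hys
  have hlens := takeUntil_length_eq hc P hP hys
  have hxs2 : x ∈ (P.takeUntil y hys).support ∨ x ∈ (P.dropUntil y hys).support := by
    rw [← hsplit] at hxs
    exact (SimpleGraph.Walk.mem_support_append_iff _ _).1 hxs
  rcases hxs2 with h1 | h2
  · exact (mem_support_iff_btw hc ha _ hlens.1).1 h1
  · have hbtw2 : TBtw G y x w := (mem_support_iff_btw hc ha _ hlens.2).1 h2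
    unfold TBtw at *
    have h3 : G.dist v y ≤ G.dist v x + G.dist x y := hc.dist_triangle
    have h0 : G.dist y x = G.dist x y := dc G y x
    have : G.dist x y = 0 := by omega
    have hxy : x = y := (hc.dist_eq_zero_iff).1 this
    subst hxy
    simp [TBtw]

/-- Parent: each `u ≠ r` has a neighbor strictly closer to `r`, lying between. -/
lemma exists_parent (hc : G.Connected) {r u : V} (h : u ≠ r) :
    ∃ w, G.Adj u w ∧ G.dist r w + 1 = G.dist r u ∧ TBtw G r w u := by
  have hne : G.dist u r ≠ 0 := by
    rw [SimpleGraph.dist_ne_zero_iff_ne_and_reachable]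
    exact ⟨h, hc u r⟩
  obtain ⟨Q, hQ⟩ := (hc u r).exists_walk_length_eq_dist
  cases Q with
  | nil => exact absurd rfl h
  | cons hadj Q' =>
    rename_i w
    refine ⟨w, hadj, ?_, ?_⟩
    · have h1 : G.dist w r ≤ Q'.length := SimpleGraph.dist_le _
      have h2 : Q'.length + 1 = G.dist u r := by
        simpa [SimpleGraph.Walk.length_cons] using hQ
      have h3 : G.dist u r ≤ G.dist u w + G.dist w r := hc.dist_triangle
      have h4 : G.dist u w = 1 := SimpleGraph.dist_eq_one_iff_adj.2 hadj
      have h5 : G.dist r w = G.dist w r := dc G r w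
      have h6 : G.dist r u = G.dist u r := dc G r u
      omega
    · have h1 : G.dist w r ≤ Q'.length := SimpleGraph.dist_le _
      have h2 : Q'.length + 1 = G.dist u r := by
        simpa [SimpleGraph.Walk.length_cons] using hQ
      have h3 : G.dist u r ≤ G.dist u w + G.dist w r := hc.dist_triangle
      have h4 : G.dist u w = 1 := SimpleGraph.dist_eq_one_iff_adj.2 hadj
      have h5 : G.dist w u = 1 := by rw [dc G w u]; exact h4
      unfold TBtw
      have h6 : G.dist r w = G.dist w r := dc G r w
      have h7 : G.dist r u = G.dist u r := dc G r u
      omega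

/-- In a tree, adjacent vertices have distances to any root differing by exactly one. -/
lemma adj_dist_dichotomy (hc : G.Connected) (ha : G.IsAcyclic) {u w r : V}
    (h : G.Adj u w) :
    G.dist r w + 1 = G.dist r u ∨ G.dist r u + 1 = G.dist r w := by
  have h1 : G.dist u w = 1 := SimpleGraph.dist_eq_one_iff_adj.2 h
  have h2 : G.dist w u = 1 := by rw [dc G w u]; exact h1
  have ht1 : G.dist r u ≤ G.dist r w + G.dist w u := hc.dist_triangle
  have ht2 : G.dist r w ≤ G.dist r u + G.dist u w := hc.dist_triangle
  have hne : G.dist r u ≠ G.dist r w := by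
    intro heq
    by_cases hru : u = r
    · subst hru
      have h0 : G.dist u u = 0 := by simp
      have : G.dist u w = 0 := by omega
      omega
    · have hn1 : G.dist r u ≠ 0 := by
        rw [SimpleGraph.dist_ne_zero_iff_ne_and_reachable]
        exact ⟨fun hh => hru hh.symm, hc r u⟩
      obtain ⟨P, hP⟩ := (hc r u).exists_walk_length_eq_dist
      have hPp : P.IsPath := SimpleGraph.Walk.isPath_of_length_eq_dist _ hP
      have hwns : w ∉ P.support := by
        intro hmem
        have hb : TBtw G r w u := (mem_support_iff_btw hc ha P hP).1 hmem
        unfold TBtw at hb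
        omega
      have hW : (SimpleGraph.Walk.cons h.symm P.reverse).IsPath := by
        rw [SimpleGraph.Walk.cons_isPath_iff]
        refine ⟨hPp.reverse, ?_⟩
        rw [SimpleGraph.Walk.support_reverse, List.mem_reverse]
        exact hwns
      obtain ⟨Q, hQ⟩ := (hc r w).exists_walk_length_eq_dist
      have hQp : Q.IsPath := SimpleGraph.Walk.isPath_of_length_eq_dist _ hQ
      have heq2 : SimpleGraph.Walk.cons h.symm P.reverse = Q.reverse :=
        walk_unique ha hW hQp.reverse
      have hl : (SimpleGraph.Walk.cons h.symm P.reverse).length = Q.reverse.length := by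
        rw [heq2]
      rw [SimpleGraph.Walk.length_cons, SimpleGraph.Walk.length_reverse,
        SimpleGraph.Walk.length_reverse] at hl
      omega
  omega

/-- Two distinct neighbors of a common vertex have it between them. -/
lemma two_neighbors (hc : G.Connected) (ha : G.IsAcyclic) {x y z : V}
    (hy : G.Adj x y) (hz : G.Adj x z) (hne : y ≠ z) : TBtw G y x z := by
  have hd1 : G.dist y x = 1 := SimpleGraph.dist_eq_one_iff_adj.2 hy.symm
  have hd2 : G.dist x z = 1 := SimpleGraph.dist_eq_one_iff_adj.2 hz
  have htri : G.dist y z ≤ G.dist y x + G.dist x z := hc.dist_triangle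
  have hne0 : G.dist y z ≠ 0 := by
    rw [SimpleGraph.dist_ne_zero_iff_ne_and_reachable]
    exact ⟨hne, hc y z⟩
  have hne1 : G.dist y z ≠ 1 := by
    intro h1
    have hadj : G.Adj y z := SimpleGraph.dist_eq_one_iff_adj.1 h1
    have hP1 : (SimpleGraph.Walk.cons hadj SimpleGraph.Walk.nil).IsPath := by
      simp [SimpleGraph.Walk.cons_isPath_iff]
      exact hadj.ne
    have hP2 : (SimpleGraph.Walk.cons hy.symm
        (SimpleGraph.Walk.cons hz SimpleGraph.Walk.nil)).IsPath := by
      simp [SimpleGraph.Walk.cons_isPath_iff]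
      exact ⟨hz.ne, hy.ne', hne⟩
    have := walk_unique ha hP1 hP2
    have hlen := congrArg SimpleGraph.Walk.length this
    simp [SimpleGraph.Walk.length_cons] at hlen
  unfold TBtw
  omega


end TreeAux


end TreeToolkit

section InfectionBasics

open SILimited TreeAux SimpleGraph

variable {V : Type*} {G : SimpleGraph V} {v : V} {t : ℕ} {Z : V → ℕ → NodeState}

lemma isInfected_iff (s : NodeState) :
    s.IsInfected ↔ s = .infected ∨ s = .explicitN := by
  cases s <;> simp [NodeState.IsInfected]

lemma not_isInfected_iff (s : NodeState) :
    ¬ s.IsInfected ↔ s = .susceptible ∨ s = .nonsusceptible := by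
  cases s <;> simp [NodeState.IsInfected]

namespace SILimited.IsInfectionPath

variable (hZ : IsInfectionPath G v t Z)
include hZ

lemma infected_step {u : V} {τ : ℕ} (hτ : τ < t) (h : (Z u τ).IsInfected) :
    (Z u (τ + 1)).IsInfected := by
  rcases (isInfected_iff _).1 h with h' | h'
  · rw [hZ.infected_stays u τ hτ h']; trivial
  · rw [hZ.explicit_stays u τ hτ h']; trivial

lemma infected_mono {u : V} {τ τ' : ℕ} (h1 : τ ≤ τ') (h2 : τ' ≤ t)
    (h : (Z u τ).IsInfected) : (Z u τ').IsInfected := by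
  induction τ' with
  | zero =>
    have : τ = 0 := by omega
    rw [← this]; exact h
  | succ n ih =>
    rcases Nat.lt_or_ge τ (n+1) with hlt | hge
    · exact hZ.infected_step (by omega) (ih (by omega) (by omega))
    · have : τ = n + 1 := by omega
      rw [← this]; exact h

lemma source_state : ∀ τ, τ ≤ t → Z v τ = Z v 0 := by
  intro τ
  induction τ with
  | zero => intro _; rfl
  | succ n ih =>
    intro hn
    have h0 := hZ.source_infected
    have ihn := ih (by omega)
    rcases (isInfected_iff _).1 h0 with h' | h'
    · rw [hZ.infected_stays v n (by omega) (by rw [ihn]; exact h')]; exact h'.symm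
    · rw [hZ.explicit_stays v n (by omega) (by rw [ihn]; exact h')]; exact h'.symm

lemma source_infected_all {τ : ℕ} (hτ : τ ≤ t) : (Z v τ).IsInfected := by
  rw [hZ.source_state τ hτ]; exact hZ.source_infected

/-- An infected node was infected by a chain from the source: any vertex between
the source and an infected node was infected correspondingly earlier. -/
lemma infection_travel (hc : G.Connected) (ha : G.IsAcyclic) :
    ∀ τ, τ ≤ t → ∀ w, (Z w τ).IsInfected → ∀ x, TBtw G v x w →
      (Z x (τ - G.dist x w)).IsInfected := by
  intro τ
  induction τ with
  | zero =>
    intro _ w hw x hbtw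
    have hwv : w = v := by
      by_contra hne
      exact hZ.init_uninfected w hne hw
    have h0 : G.dist v w = 0 := by rw [hwv]; simp
    have hx0 : G.dist v x = 0 := by
      unfold TBtw at hbtw; omega
    have hxv : v = x := (hc.dist_eq_zero_iff).1 hx0
    rw [← hxv]
    simpa using hZ.source_infected
  | succ τ ih =>
    intro hτ w hw x hbtw
    by_cases hwτ : (Z w τ).IsInfected
    · have hx := ih (by omega) w hwτ x hbtw
      rcases Nat.lt_or_ge τ (G.dist x w) with hge | hle
      · have : τ + 1 - G.dist x w ≤ τ - G.dist x w := by omega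
        exact hZ.infected_mono (by omega) (by omega) hx
      · have heq : (τ - G.dist x w) + 1 = τ + 1 - G.dist x w := by omega
        rw [← heq]
        exact hZ.infected_step (by omega) hx
    · have hsus : Z w τ = .susceptible :=
        (hZ.infect_from_susceptible w τ (by omega) hw).resolve_left hwτ
      obtain ⟨w2, hadj, hinf2⟩ := (hZ.susceptible_iff w τ (by omega) hwτ).1 hsus
      have hd1 : G.dist w w2 = 1 := SimpleGraph.dist_eq_one_iff_adj.2 hadj
      have hd2 : G.dist w2 w = 1 := by rw [dc G w2 w]; exact hd1
      rcases adj_dist_dichotomy hc ha hadj (r := v) with hcase | hcase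
      · -- parent case : dist v w2 + 1 = dist v w
        by_cases hxw : x = w
        · subst hxw
          have : G.dist x x = 0 := by simp
          simpa [this] using hw
        · have hdxw : G.dist x w ≠ 0 := by
            rw [SimpleGraph.dist_ne_zero_iff_ne_and_reachable]
            exact ⟨hxw, hc x w⟩
          have hbtw2 : TBtw G v w2 w := by unfold TBtw; omega
          have hle : G.dist v x ≤ G.dist v w2 := by
            unfold TBtw at hbtw; omega
          have hbtw3 : TBtw G v x w2 := btw_order hc ha hbtw hbtw2 hle
          have hx := ih (by omega) w2 hinf2 x hbtw3
          have hdist : G.dist x w2 = G.dist x w - 1 := by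
            unfold TBtw at hbtw hbtw3; omega
          have : τ - G.dist x w2 = τ + 1 - G.dist x w := by omega
          rw [← this]
          exact hx
      · -- child case : dist v w + 1 = dist v w2 ; contradiction
        exfalso
        have hbtw2 : TBtw G v w w2 := by unfold TBtw; omega
        have hx := ih (by omega) w2 hinf2 w hbtw2
        exact hwτ (hZ.infected_mono (by omega) (by omega) hx)

lemma infected_dist_le (hc : G.Connected) :
    ∀ τ, τ ≤ t → ∀ w, (Z w τ).IsInfected → G.dist v w ≤ τ := by
  intro τ
  induction τ with
  | zero =>
    intro _ w hw
    have hwv : w = v := by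
      by_contra hne
      exact hZ.init_uninfected w hne hw
    subst hwv
    simp
  | succ τ ih =>
    intro hτ w hw
    by_cases hwτ : (Z w τ).IsInfected
    · have := ih (by omega) w hwτ; omega
    · have hsus : Z w τ = .susceptible :=
        (hZ.infect_from_susceptible w τ (by omega) hw).resolve_left hwτ
      obtain ⟨w2, hadj, hinf2⟩ := (hZ.susceptible_iff w τ (by omega) hwτ).1 hsus
      have h2 := ih (by omega) w2 hinf2
      have ht : G.dist v w ≤ G.dist v w2 + G.dist w2 w := hc.dist_triangle
      have hd : G.dist w2 w = 1 := by
        rw [dc G w2 w]; exact SimpleGraph.dist_eq_one_iff_adj.2 hadj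
      omega

end SILimited.IsInfectionPath

lemma ball_finite {V : Type*} {G : SimpleGraph V} (hc : G.Connected)
    (hloc : ∀ u : V, (G.neighborSet u).Finite) (v : V) :
    ∀ n : ℕ, {u : V | G.dist v u ≤ n}.Finite := by
  intro n
  induction n with
  | zero =>
    apply Set.Finite.subset (Set.finite_singleton v)
    intro u hu
    simp only [Set.mem_setOf_eq, Nat.le_zero] at hu
    have : v = u := (hc.dist_eq_zero_iff).1 hu
    simp [← this]
  | succ n ih =>
    apply Set.Finite.subset (ih.union (Set.Finite.biUnion ih (fun w _ => hloc w)))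
    intro u hu
    simp only [Set.mem_setOf_eq] at hu
    rcases Nat.lt_or_ge n (G.dist v u) with hgt | hle
    · have hne : u ≠ v := by
        intro h; subst h
        rw [show G.dist u u = 0 from by rw [SimpleGraph.dist_self]] at hgt
        omega
      obtain ⟨w, hadj, hdist, _⟩ := TreeAux.exists_parent hc hne
      right
      refine Set.mem_biUnion (show w ∈ {u : V | G.dist v u ≤ n} by
        simp only [Set.mem_setOf_eq]; omega) ?_
      exact hadj.symm
    · left; exact hle

end InfectionBasics

section SpanLemmas

open SILimited TreeAux SimpleGraph

variable {V : Type*} {G : SimpleGraph V} {Ve : Set V} {v : V}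

/-- Pure arithmetic chain lemma for betweenness. -/
lemma btw_chain (hc : G.Connected) {v x u a : V}
    (h1 : TBtw G v x u) (h2 : TBtw G v u a) : TBtw G v x a ∧ TBtw G x u a := by
  have t1 : G.dist x a ≤ G.dist x u + G.dist u a := hc.dist_triangle
  have t2 : G.dist v a ≤ G.dist v x + G.dist x a := hc.dist_triangle
  unfold TBtw at *
  omega

lemma mem_span_of_mem {a : V} (h : a ∈ Ve ∪ {v}) : a ∈ spanVerts G (Ve ∪ {v}) :=
  ⟨a, h, a, h, by simp⟩

lemma v_mem_span : v ∈ spanVerts G (Ve ∪ {v}) :=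
  mem_span_of_mem (Or.inr rfl)

lemma span_reach (hc : G.Connected) (ha : G.IsAcyclic) {u : V}
    (hu : u ∈ spanVerts G (Ve ∪ {v})) : ∃ a ∈ Ve ∪ {v}, TBtw G v u a := by
  obtain ⟨a, haS, b, hbS, hab⟩ := hu
  have hbtw : TBtw G a u b := hab.symm
  rcases btw_split hc ha hbtw v with h | h
  · exact ⟨a, haS, h⟩
  · exact ⟨b, hbS, h⟩

lemma dist_le_dbar (hVefin : Ve.Finite) {a : V} (haS : a ∈ Ve ∪ {v}) :
    G.dist v a ≤ dbar G v Ve := by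
  rcases haS with h | h
  · exact le_csSup (Set.Finite.bddAbove (hVefin.image _)) (Set.mem_image_of_mem _ h)
  · simp only [Set.mem_singleton_iff] at h
    subst h
    simp [SimpleGraph.dist_self]

lemma span_dist_le (hc : G.Connected) (ha : G.IsAcyclic) (hVefin : Ve.Finite) {u : V}
    (hu : u ∈ spanVerts G (Ve ∪ {v})) : G.dist v u ≤ dbar G v Ve := by
  obtain ⟨a, haS, hbtw⟩ := span_reach hc ha hu
  have := dist_le_dbar (G := G) hVefin haS
  unfold TBtw at hbtw
  omega

lemma span_finite (hc : G.Connected) (ha : G.IsAcyclic)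
    (hloc : ∀ u : V, (G.neighborSet u).Finite) (hVefin : Ve.Finite) :
    (spanVerts G (Ve ∪ {v})).Finite :=
  Set.Finite.subset (ball_finite hc hloc v (dbar G v Ve))
    (fun u hu => span_dist_le hc ha hVefin hu)

lemma span_vclosed (hc : G.Connected) (ha : G.IsAcyclic) {u x : V}
    (hu : u ∈ spanVerts G (Ve ∪ {v})) (hx : TBtw G v x u) :
    x ∈ spanVerts G (Ve ∪ {v}) := by
  obtain ⟨a, haS, hbtw⟩ := span_reach hc ha hu
  obtain ⟨h1, _⟩ := btw_chain hc hx hbtw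
  refine ⟨v, Or.inr rfl, a, haS, ?_⟩
  unfold TBtw at h1
  omega

lemma mem_away_iff {u w : V} : w ∈ subtreeAway G u v ↔ TBtw G v u w := by
  unfold subtreeAway TBtw
  simp [eq_comm]

/-- The farthest vertex of the span in the direction away from `v` can be taken in `Ve`,
and the basic bounds on `D u`. -/
lemma Dmax_spec (hc : G.Connected) (ha : G.IsAcyclic)
    (hloc : ∀ u : V, (G.neighborSet u).Finite) (hVefin : Ve.Finite) {u : V}
    (hu : u ∈ spanVerts G (Ve ∪ {v})) (hune : u ≠ v) :
    (∃ w ∈ Ve, w ∈ subtreeAway G u v ∩ spanVerts G (Ve ∪ {v}) ∧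
      G.dist u w = dbar G u (subtreeAway G u v ∩ spanVerts G (Ve ∪ {v}))) ∧
    dbar G u (subtreeAway G u v ∩ spanVerts G (Ve ∪ {v})) + G.dist v u ≤ dbar G v Ve := by
  classical
  set A : Set V := subtreeAway G u v ∩ spanVerts G (Ve ∪ {v}) with hA
  have huA : u ∈ A := by
    constructor
    · rw [mem_away_iff]; exact btw_self_right v u
    · exact hu
  have hAfin : A.Finite := Set.Finite.subset (span_finite hc ha hloc hVefin)
    (fun x hx => hx.2)
  have hne : (G.dist u '' A).Nonempty := ⟨G.dist u u, Set.mem_image_of_mem _ huA⟩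
  have hfin : (G.dist u '' A).Finite := hAfin.image _
  have hDmem : dbar G u A ∈ G.dist u '' A := Set.Nonempty.csSup_mem hne hfin
  obtain ⟨w0, hw0A, hw0d⟩ := hDmem
  have hub : ∀ w ∈ A, G.dist u w ≤ dbar G u A := fun w hw =>
    le_csSup (Set.Finite.bddAbove hfin) (Set.mem_image_of_mem _ hw)
  -- every element of A is within dbar G v Ve of v through u
  have hbound : ∀ w ∈ A, G.dist v u + G.dist u w ≤ dbar G v Ve := by
    intro w hw
    have h1 : TBtw G v u w := mem_away_iff.1 hw.1
    have h2 : G.dist v w ≤ dbar G v Ve := span_dist_le hc ha hVefin hw.2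
    unfold TBtw at h1
    omega
  have hDbound : dbar G u A + G.dist v u ≤ dbar G v Ve := by
    have := hbound w0 hw0A
    omega
  refine ⟨?_, hDbound⟩
  -- find a Ve element at least as far as w0
  have hexist : ∃ w ∈ Ve, w ∈ A ∧ G.dist u w0 ≤ G.dist u w := by
    by_cases hw0u : w0 = u
    · -- use span_reach on u
      obtain ⟨a, haS, hbtw⟩ := span_reach hc ha hu
      have haVe : a ∈ Ve := by
        rcases haS with h | h
        · exact h
        · exfalso
          simp only [Set.mem_singleton_iff] at h
          rw [h] at hbtw
          unfold TBtw at hbtw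
          have h0 : G.dist v v = 0 := by simp
          have h1 : G.dist u v = G.dist v u := dc G u v
          have : G.dist v u = 0 := by omega
          exact hune ((hc.dist_eq_zero_iff).1 this).symm
      refine ⟨a, haVe, ⟨mem_away_iff.2 hbtw, mem_span_of_mem haS⟩, ?_⟩
      subst hw0u
      simp [SimpleGraph.dist_self]
    · obtain ⟨a, haS, b, hbS, hab⟩ := hw0A.2
      have hbtw : TBtw G a w0 b := hab.symm
      have key : ∀ c ∈ Ve ∪ {v}, TBtw G u w0 c →
          ∃ w ∈ Ve, w ∈ A ∧ G.dist u w0 ≤ G.dist u w := by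
        intro c hcS hbwc
        have hw0away : TBtw G v u w0 := mem_away_iff.1 hw0A.1
        have hcVe : c ∈ Ve := by
          rcases hcS with h | h
          · exact h
          · exfalso
            simp only [Set.mem_singleton_iff] at h
            rw [h] at hbwc
            unfold TBtw at hbwc hw0away
            have e0 : G.dist v v = 0 := by simp
            have e1 : G.dist u v = G.dist v u := dc G u v
            have e2 : G.dist w0 v = G.dist v w0 := dc G w0 v
            have e3 : G.dist u w0 = 0 := by omega
            exact hw0u ((hc.dist_eq_zero_iff).1 e3).symm
        -- show c ∈ subtreeAway G u v
        have hcaway : TBtw G v u c := by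
          rcases btw_split hc ha hbwc v with h | h
          · exfalso
            unfold TBtw at h hw0away
            have e2 : G.dist w0 u = G.dist u w0 := dc G w0 u
            have e3 : G.dist u w0 = 0 := by omega
            exact hw0u ((hc.dist_eq_zero_iff).1 e3).symm
          · -- TBtw v w0 c
            unfold TBtw at h hw0away hbwc ⊢
            omega
        refine ⟨c, hcVe, ⟨mem_away_iff.2 hcaway, mem_span_of_mem hcS⟩, ?_⟩
        unfold TBtw at hbwc
        omega
      rcases btw_split hc ha hbtw u with h | h
      · exact key a haS h
      · exact key b hbS h
  obtain ⟨w, hwVe, hwA, hwge⟩ := hexist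
  have h1 : G.dist u w ≤ dbar G u A := hub w hwA
  refine ⟨w, hwVe, hwA, by omega⟩

end SpanLemmas

section Boundary

open SILimited TreeAux SimpleGraph

variable {V : Type*} {G : SimpleGraph V} {v : V}

/-- A set of vertices closed under taking vertices between `v` and its members. -/
def VClosed (G : SimpleGraph V) (v : V) (W : Set V) : Prop :=
  v ∈ W ∧ ∀ w ∈ W, ∀ x, TBtw G v x w → x ∈ W

/-- The external boundary of a vertex set. -/
def bdry (G : SimpleGraph V) (W : Set V) : Set V :=
  {x | x ∉ W ∧ ∃ y ∈ W, G.Adj x y}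

lemma bdry_finite (hloc : ∀ u : V, (G.neighborSet u).Finite) {W : Set V}
    (hW : W.Finite) : (bdry G W).Finite := by
  apply Set.Finite.subset (Set.Finite.biUnion hW (fun y _ => hloc y))
  rintro x ⟨hx, y, hyW, hadj⟩
  exact Set.mem_biUnion hyW hadj.symm

lemma unique_nbr (hc : G.Connected) (ha : G.IsAcyclic) {W : Set V}
    (hW : VClosed G v W) {x y z : V} (hx : x ∉ W)
    (hyW : y ∈ W) (hxy : G.Adj x y) (hzW : z ∈ W) (hxz : G.Adj x z) : y = z := by
  by_contra hne
  have hbtw : TBtw G y x z := two_neighbors hc ha hxy hxz hne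
  rcases btw_split hc ha hbtw v with h | h
  · exact hx (hW.2 y hyW x h)
  · exact hx (hW.2 z hzW x h)

lemma bdry_mono (hc : G.Connected) (ha : G.IsAcyclic)
    (hloc : ∀ u : V, (G.neighborSet u).Finite)
    (hdeg : ∀ u : V, 2 ≤ (G.neighborSet u).ncard)
    {W' : Set V} (hfin' : W'.Finite) (hW'c : VClosed G v W') :
    ∀ n : ℕ, ∀ W : Set V, (W' \ W).ncard = n → VClosed G v W → W ⊆ W' →
      (bdry G W).ncard ≤ (bdry G W').ncard := by
  intro n
  induction n using Nat.strong_induction_on with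
  | _ n IH =>
    intro W hcard hWc hsub
    by_cases hWW : W' ⊆ W
    · have : W = W' := Set.Subset.antisymm hsub hWW
      rw [this]
    · -- pick x ∈ W' \ W with minimal distance from v
      have hDne : (W' \ W).Nonempty := Set.diff_nonempty.2 hWW
      have hDfin : (W' \ W).Finite := hfin'.diff
      have himne : (G.dist v '' (W' \ W)).Nonempty := hDne.image _
      obtain ⟨x, hxD, hxd⟩ : ∃ x ∈ W' \ W, G.dist v x = sInf (G.dist v '' (W' \ W)) := by
        have := Nat.sInf_mem himne
        obtain ⟨x, hx1, hx2⟩ := this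
        exact ⟨x, hx1, hx2⟩
      have hxmin : ∀ y ∈ W' \ W, G.dist v x ≤ G.dist v y := by
        intro y hy
        rw [hxd]
        exact Nat.sInf_le (Set.mem_image_of_mem _ hy)
      have hxv : x ≠ v := by
        intro h; rw [h] at hxD; exact hxD.2 hWc.1
      obtain ⟨w1, hadj, hdist, hbtwp⟩ := exists_parent hc hxv
      have hw1W' : w1 ∈ W' := hW'c.2 x hxD.1 w1 hbtwp
      have hw1W : w1 ∈ W := by
        by_contra hw1
        have := hxmin w1 ⟨hw1W', hw1⟩
        omega
      -- W2 := insert x W is v-closed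
      have hW2c : VClosed G v (insert x W) := by
        refine ⟨Set.mem_insert_of_mem _ hWc.1, ?_⟩
        intro w hw y hy
        rcases hw with hw | hw
        · subst hw
          by_cases hyx : y = w
          · exact hyx ▸ Set.mem_insert _ _
          · have hdy : G.dist v y ≤ G.dist v w1 := by
              have h0 : G.dist y w ≠ 0 := by
                rw [SimpleGraph.dist_ne_zero_iff_ne_and_reachable]
                exact ⟨hyx, hc y w⟩
              unfold TBtw at hy
              omega
            have hbo := btw_order hc ha hy hbtwp hdy
            exact Set.mem_insert_of_mem _ (hWc.2 w1 hw1W y hbo)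
        · exact Set.mem_insert_of_mem _ (hWc.2 w hw y hy)
      have hsub2 : insert x W ⊆ W' := Set.insert_subset hxD.1 hsub
      have hcard2 : (W' \ insert x W).ncard < n := by
        have heq : W' \ insert x W = (W' \ W) \ {x} := by
          ext y
          simp only [Set.mem_diff, Set.mem_insert_iff, Set.mem_singleton_iff]
          tauto
        rw [heq]
        have := Set.ncard_diff_singleton_add_one hxD hDfin
        omega
      have hIH := IH _ hcard2 (insert x W) rfl hW2c hsub2
      -- step: bdry W ≤ bdry (insert x W)
      have hWfin : W.Finite := hfin'.subset hsub
      have hbfin2 : (bdry G (insert x W)).Finite := bdry_finite hloc (hWfin.insert x)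
      have hstep : (bdry G W).ncard ≤ (bdry G (insert x W)).ncard := by
        set A : Set V := bdry G W \ {x} with hA
        set B : Set V := G.neighborSet x \ insert x W with hB
        have hAsub : A ⊆ bdry G (insert x W) := by
          rintro y ⟨⟨hyW, z, hzW, hadjz⟩, hyx⟩
          simp only [Set.mem_singleton_iff] at hyx
          exact ⟨by simp [Set.mem_insert_iff]; exact ⟨hyx, hyW⟩,
            z, Set.mem_insert_of_mem _ hzW, hadjz⟩
        have hBsub : B ⊆ bdry G (insert x W) := by
          rintro y ⟨hyN, hyW2⟩
          exact ⟨hyW2, x, Set.mem_insert _ _, (by exact hyN : G.Adj x y).symm⟩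
        have hdisj : Disjoint A B := by
          rw [Set.disjoint_left]
          rintro y ⟨⟨hyW, z, hzW, hadjz⟩, hyx⟩ ⟨hyN, hyW2⟩
          have hxz : x ≠ z := fun h => hxD.2 (h ▸ hzW)
          have := unique_nbr hc ha hW2c (v := v) hyW2
            (Set.mem_insert _ _) (by exact hyN : G.Adj x y).symm
            (Set.mem_insert_of_mem _ hzW) hadjz
          exact hxz this
        have hBne : B.Nonempty := by
          by_contra hBe
          rw [Set.not_nonempty_iff_eq_empty] at hBe
          have hsub3 : G.neighborSet x ⊆ {w1} := by
            intro y hy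
            have hyW2 : y ∈ insert x W := by
              by_contra hyn
              have : y ∈ B := ⟨hy, hyn⟩
              rw [hBe] at this
              exact this
            rcases hyW2 with h | h
            · exfalso; exact G.irrefl (h ▸ hy)
            · have := unique_nbr hc ha hWc (v := v) hxD.2 h
                (by exact hy : G.Adj x y) hw1W hadj
              simp [this]
          have := Set.ncard_le_ncard hsub3 (Set.finite_singleton w1)
          rw [Set.ncard_singleton] at this
          have h2 := hdeg x
          omega
        have hAfin : A.Finite := (bdry_finite hloc hWfin).diff
        have hBfin : B.Finite := (hloc x).diff
        have hABsub : A ∪ B ⊆ bdry G (insert x W) := Set.union_subset hAsub hBsub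
        have hcardAB : A.ncard + B.ncard ≤ (bdry G (insert x W)).ncard := by
          rw [← Set.ncard_union_eq hdisj hAfin hBfin]
          exact Set.ncard_le_ncard hABsub hbfin2
        have hcardA : (bdry G W).ncard ≤ A.ncard + 1 := by
          have hsub4 : bdry G W ⊆ insert x A := by
            intro y hy
            by_cases hyx : y = x
            · exact hyx ▸ Set.mem_insert _ _
            · exact Set.mem_insert_of_mem _ ⟨hy, hyx⟩
          calc (bdry G W).ncard ≤ (insert x A).ncard :=
                Set.ncard_le_ncard hsub4 (hAfin.insert x)
            _ ≤ A.ncard + 1 := Set.ncard_insert_le _ _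
        have hcardB : 1 ≤ B.ncard := by
          rw [Nat.one_le_iff_ne_zero]
          intro h0
          rw [Set.ncard_eq_zero hBfin] at h0
          exact Set.not_nonempty_empty (h0 ▸ hBne)
        omega
      exact le_trans hstep hIH

end Boundary

section ProductFormula

open SILimited TreeAux SimpleGraph

variable {V : Type*} {G : SimpleGraph V} {v : V} {t : ℕ} {Z : V → ℕ → NodeState}

/-- The set of nodes infected at time `τ`. -/
def infNodes (Z : V → ℕ → NodeState) (τ : ℕ) : Set V := {u | (Z u τ).IsInfected}

/-- Indicator that `u` is susceptible at both `τ` and `τ+1`. -/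
def sInd (Z : V → ℕ → NodeState) (u : V) (τ : ℕ) : ℕ :=
  if Z u τ = .susceptible ∧ Z u (τ+1) = .susceptible then 1 else 0

/-- Indicator of the explicit state. -/
def eInd (Z : V → ℕ → NodeState) (u : V) (τ : ℕ) : ℕ :=
  if Z u τ = .explicitN then 1 else 0

/-- Indicator of the (non-explicit) infected state. -/
def iInd (Z : V → ℕ → NodeState) (u : V) (τ : ℕ) : ℕ :=
  if Z u τ = .infected then 1 else 0

namespace SILimited.IsInfectionPath

variable (hZ : IsInfectionPath G v t Z)
include hZ

lemma susc_next {u : V} {τ : ℕ} (hτ : τ < t) (hs : Z u τ = .susceptible) :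
    (Z u (τ+1)).IsInfected ∨ Z u (τ+1) = .susceptible := by
  by_cases hinf : (Z u (τ+1)).IsInfected
  · exact Or.inl hinf
  · right
    obtain ⟨w, hadj, hwinf⟩ := (hZ.susceptible_iff u τ (by omega) (by
      rw [hs]; simp [NodeState.IsInfected])).1 hs
    exact (hZ.susceptible_iff u (τ+1) (by omega) hinf).2
      ⟨w, hadj, hZ.infected_step (by omega) hwinf⟩

lemma nonsusc_next {u : V} {τ : ℕ} (hτ : τ < t) (hs : Z u τ = .nonsusceptible) :
    ¬ (Z u (τ+1)).IsInfected := by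
  intro hinf
  rcases hZ.infect_from_susceptible u τ (by omega) hinf with h | h
  · rw [hs] at h; simp [NodeState.IsInfected] at h
  · rw [hs] at h; simp at h

lemma trans_formula (p qu : ℝ) {u : V} {τ : ℕ} (hτ : τ < t) :
    transProb p qu (Z u τ) (Z u (τ+1)) =
      (1-p) ^ (sInd Z u τ) * (p*qu) ^ (eInd Z u (τ+1) - eInd Z u τ) *
        (p*(1-qu)) ^ (iInd Z u (τ+1) - iInd Z u τ) := by
  have hsn := fun hs => hZ.susc_next (u := u) hτ hs
  have hnn := fun hs => hZ.nonsusc_next (u := u) hτ hs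
  have his := fun hs => hZ.infected_stays u τ hτ hs
  have hes := fun hs => hZ.explicit_stays u τ hτ hs
  cases h1 : Z u τ <;> cases h2 : Z u (τ+1) <;>
    simp_all [transProb, sInd, eInd, iInd, NodeState.IsInfected]

lemma eInd_mono {u : V} {τ : ℕ} (hτ : τ < t) : eInd Z u τ ≤ eInd Z u (τ+1) := by
  unfold eInd
  by_cases h : Z u τ = .explicitN
  · rw [hZ.explicit_stays u τ hτ h]; simp [h]
  · simp [h]

lemma iInd_mono {u : V} {τ : ℕ} (hτ : τ < t) : iInd Z u τ ≤ iInd Z u (τ+1) := by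
  unfold iInd
  by_cases h : Z u τ = .infected
  · rw [hZ.infected_stays u τ hτ h]; simp [h]
  · simp [h]

end SILimited.IsInfectionPath

lemma telescope_sum {f : ℕ → ℕ} {t : ℕ} (hmono : ∀ τ < t, f τ ≤ f (τ+1)) :
    f 0 ≤ f t ∧ ∑ τ ∈ Finset.range t, (f (τ+1) - f τ) = f t - f 0 := by
  induction t with
  | zero => simp
  | succ n ih =>
    obtain ⟨h1, h2⟩ := ih (fun τ hτ => hmono τ (by omega))
    have h3 := hmono n (by omega)
    rw [Finset.sum_range_succ, h2]
    omega

/-- Per-node product formula. -/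
lemma pernode_prod (hZ : SILimited.IsInfectionPath G v t Z) (p qu : ℝ) (u : V) :
    ∏ τ ∈ Finset.range t, transProb p qu (Z u τ) (Z u (τ+1)) =
      (1-p) ^ (∑ τ ∈ Finset.range t, sInd Z u τ) *
      (p*qu) ^ (eInd Z u t - eInd Z u 0) *
      (p*(1-qu)) ^ (iInd Z u t - iInd Z u 0) := by
  rw [Finset.prod_congr rfl
    (fun τ hτ => hZ.trans_formula p qu (Finset.mem_range.1 hτ))]
  rw [Finset.prod_mul_distrib, Finset.prod_mul_distrib]
  rw [Finset.prod_pow_eq_pow_sum, Finset.prod_pow_eq_pow_sum, Finset.prod_pow_eq_pow_sum]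
  rw [(telescope_sum (f := eInd Z u) (t := t) (fun τ hτ => hZ.eInd_mono hτ)).2,
    (telescope_sum (f := iInd Z u) (t := t) (fun τ hτ => hZ.iInd_mono hτ)).2]

end ProductFormula

section GlobalCounting

open SILimited TreeAux SimpleGraph

variable {V : Type*} {G : SimpleGraph V} {Ve : Set V} {v : V} {t : ℕ} {Z : V → ℕ → NodeState}

/-- Nodes susceptible at both `τ` and `τ+1`. -/
def pairSet (Z : V → ℕ → NodeState) (τ : ℕ) : Set V :=
  {u | Z u τ = .susceptible ∧ Z u (τ+1) = .susceptible}

/-- Total count of susceptible-to-susceptible transitions. -/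
noncomputable def Mval (Z : V → ℕ → NodeState) (t : ℕ) : ℕ :=
  ∑ τ ∈ Finset.range t, (pairSet Z τ).ncard

namespace SILimited.IsInfectionPath

variable (hZ : IsInfectionPath G v t Z)
include hZ

lemma infSet_subset_ball (hc : G.Connected) {τ : ℕ} (hτ : τ ≤ t) :
    infNodes Z τ ⊆ {u | G.dist v u ≤ t} := fun u hu => by
  have := hZ.infected_dist_le hc τ hτ u hu
  simp only [Set.mem_setOf_eq]
  omega

lemma infSet_finite (hc : G.Connected) (hloc : ∀ u : V, (G.neighborSet u).Finite)
    {τ : ℕ} (hτ : τ ≤ t) : (infNodes Z τ).Finite :=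
  (ball_finite hc hloc v t).subset (hZ.infSet_subset_ball hc hτ)

lemma infSet_mono {τ τ' : ℕ} (h1 : τ ≤ τ') (h2 : τ' ≤ t) :
    infNodes Z τ ⊆ infNodes Z τ' := fun u hu => hZ.infected_mono h1 h2 hu

lemma infSet_vclosed (hc : G.Connected) (ha : G.IsAcyclic) {τ : ℕ} (hτ : τ ≤ t) :
    VClosed G v (infNodes Z τ) := by
  refine ⟨hZ.source_infected_all hτ, ?_⟩
  intro w hw x hbtw
  have := hZ.infection_travel hc ha τ hτ w hw x hbtw
  exact hZ.infected_mono (by omega) hτ this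

lemma susc_dist (hc : G.Connected) {u : V} {τ : ℕ} (hτ : τ ≤ t)
    (hs : Z u τ = .susceptible) : G.dist v u ≤ τ + 1 := by
  obtain ⟨w, hadj, hwinf⟩ := (hZ.susceptible_iff u τ hτ (by
    rw [hs]; simp [NodeState.IsInfected])).1 hs
  have h1 := hZ.infected_dist_le hc τ hτ w hwinf
  have h2 : G.dist v u ≤ G.dist v w + G.dist w u := hc.dist_triangle
  have h3 : G.dist w u = 1 := by
    rw [dc G w u]; exact SimpleGraph.dist_eq_one_iff_adj.2 hadj
  omega

lemma bdry_infSet {τ : ℕ} (hτ : τ ≤ t) :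
    bdry G (infNodes Z τ) = {u | Z u τ = .susceptible} := by
  ext u
  constructor
  · rintro ⟨hu, y, hy, hadj⟩
    exact (hZ.susceptible_iff u τ hτ hu).2 ⟨y, hadj, hy⟩
  · intro hs
    have hni : ¬ (Z u τ).IsInfected := by rw [hs]; simp [NodeState.IsInfected]
    obtain ⟨w, hadj, hwinf⟩ := (hZ.susceptible_iff u τ hτ hni).1 hs
    exact ⟨hni, w, hwinf, hadj⟩

lemma susc_set_split {τ : ℕ} (hτ : τ < t) :
    {u | Z u τ = .susceptible} = pairSet Z τ ∪ (infNodes Z (τ+1) \ infNodes Z τ) ∧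
    Disjoint (pairSet Z τ) (infNodes Z (τ+1) \ infNodes Z τ) := by
  constructor
  · ext u
    constructor
    · intro hs
      rcases hZ.susc_next hτ hs with h | h
      · right
        refine ⟨h, ?_⟩
        simp only [infNodes, Set.mem_setOf_eq]
        rw [hs]; simp [NodeState.IsInfected]
      · exact Or.inl ⟨hs, h⟩
    · rintro (⟨h1, _⟩ | ⟨h1, h2⟩)
      · exact h1
      · exact (hZ.infect_from_susceptible u τ hτ h1).resolve_left h2
  · rw [Set.disjoint_left]
    rintro u ⟨_, h2⟩ ⟨h3, _⟩
    simp only [infNodes, Set.mem_setOf_eq] at h3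
    rw [h2] at h3
    simp [NodeState.IsInfected] at h3

lemma infSet_zero : infNodes Z 0 = {v} := by
  ext u
  simp only [infNodes, Set.mem_setOf_eq, Set.mem_singleton_iff]
  constructor
  · intro h
    by_contra hne
    exact hZ.init_uninfected u hne h
  · intro h; rw [h]; exact hZ.source_infected

/-- The master counting identity. -/
lemma M_identity (hc : G.Connected) (ha : G.IsAcyclic)
    (hloc : ∀ u : V, (G.neighborSet u).Finite) :
    Mval Z t + (infNodes Z t).ncard =
      (∑ τ ∈ Finset.range t, (bdry G (infNodes Z τ)).ncard) + 1 := by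
  have hfin : ∀ τ, τ ≤ t → (infNodes Z τ).Finite := fun τ hτ => hZ.infSet_finite hc hloc hτ
  have hcard_succ : ∀ τ, τ < t → (infNodes Z (τ+1)).ncard =
      (infNodes Z τ).ncard + (infNodes Z (τ+1) \ infNodes Z τ).ncard := by
    intro τ hτ
    have hsub : infNodes Z τ ⊆ infNodes Z (τ+1) := hZ.infSet_mono (by omega) (by omega)
    conv_lhs => rw [← Set.union_diff_cancel hsub]
    rw [Set.ncard_union_eq Set.disjoint_sdiff_right (hfin τ (by omega))
      ((hfin (τ+1) (by omega)).diff)]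
  have key : ∀ n, n ≤ t → (infNodes Z n).ncard =
      1 + ∑ τ ∈ Finset.range n, (infNodes Z (τ+1) \ infNodes Z τ).ncard := by
    intro n
    induction n with
    | zero =>
      intro _
      rw [hZ.infSet_zero]
      simp
    | succ m ih =>
      intro hm
      rw [Finset.sum_range_succ, hcard_succ m (by omega), ih (by omega)]
      omega
  have hbdry : ∀ τ, τ < t → (bdry G (infNodes Z τ)).ncard =
      (pairSet Z τ).ncard + (infNodes Z (τ+1) \ infNodes Z τ).ncard := by
    intro τ hτ
    obtain ⟨hsplit, hdisj⟩ := hZ.susc_set_split hτ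
    have hsusfin : ({u | Z u τ = .susceptible} : Set V).Finite := by
      rw [← hZ.bdry_infSet (by omega : τ ≤ t)]
      exact bdry_finite hloc (hfin τ (by omega))
    have hfin1 : (pairSet Z τ).Finite :=
      hsusfin.subset (fun u hu => hu.1)
    have hfin2 : (infNodes Z (τ+1) \ infNodes Z τ).Finite :=
      (hfin (τ+1) (by omega)).diff
    rw [hZ.bdry_infSet (by omega : τ ≤ t), hsplit]
    exact Set.ncard_union_eq hdisj hfin1 hfin2
  have hsum : ∑ τ ∈ Finset.range t, (bdry G (infNodes Z τ)).ncard =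
      Mval Z t + ∑ τ ∈ Finset.range t, (infNodes Z (τ+1) \ infNodes Z τ).ncard := by
    rw [Finset.sum_congr rfl (fun τ hτ => hbdry τ (Finset.mem_range.1 hτ))]
    rw [Finset.sum_add_distrib]
    rfl
  have h1 := key t le_rfl
  rw [hsum, h1]
  omega

end SILimited.IsInfectionPath

end GlobalCounting

section PathFormula

open SILimited TreeAux SimpleGraph

variable {V : Type*} {G : SimpleGraph V} {Ve : Set V} {v : V} {t : ℕ} {Z : V → ℕ → NodeState}

namespace SILimited.IsInfectionPath

variable (hZ : IsInfectionPath G v t Z)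
include hZ

lemma source_explicit_iff (hcons : ConsistentWith Ve t Z) :
    Z v 0 = .explicitN ↔ v ∈ Ve := by
  have hst := hZ.source_state t le_rfl
  constructor
  · intro h
    exact (hcons v).1 (by rw [hst, h])
  · intro h
    rw [← hst]
    exact (hcons v).2 h

lemma ve_infected (hcons : ConsistentWith Ve t Z) {u : V} (hu : u ∈ Ve) :
    (Z u t).IsInfected := by
  rw [(hcons u).2 hu]
  simp [NodeState.IsInfected]

lemma nonsusc_outside (hc : G.Connected) {u : V} (hu : ¬ G.dist v u ≤ t + 1) :
    ∀ τ, τ ≤ t → Z u τ = .nonsusceptible := by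
  intro τ hτ
  have hni : ¬ (Z u τ).IsInfected := by
    intro h
    exact hu (by have := hZ.infected_dist_le hc τ hτ u h; omega)
  rcases (not_isInfected_iff _).1 hni with h | h
  · exfalso
    exact hu (by have := hZ.susc_dist hc hτ h; omega)
  · exact h

lemma e_factor (hcons : ConsistentWith Ve t Z) (p : ℝ) (q : V → ℝ) (u : V) :
    (p * q u) ^ (eInd Z u t - eInd Z u 0) =
      if u ∈ Ve ∧ u ≠ v then p * q u else 1 := by
  by_cases huv : u = v
  · subst huv
    have hst := hZ.source_state t le_rfl
    simp [eInd, hst]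
  · by_cases hVe : u ∈ Ve
    · have h1 : eInd Z u t = 1 := by simp [eInd, (hcons u).2 hVe]
      have h0 : eInd Z u 0 = 0 := by
        have := hZ.init_uninfected u huv
        simp only [eInd, ite_eq_right_iff]
        intro h
        exact absurd (by rw [h]; simp [NodeState.IsInfected]) this
      rw [h1, h0]
      simp [hVe, huv]
    · have h1 : eInd Z u t = 0 := by
        simp only [eInd, ite_eq_right_iff]
        intro h
        exact absurd ((hcons u).1 h) hVe
      rw [h1]
      simp [hVe]

lemma i_factor (hcons : ConsistentWith Ve t Z) (p : ℝ) (q : V → ℝ) (u : V) :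
    (p * (1 - q u)) ^ (iInd Z u t - iInd Z u 0) =
      if Z u t = .infected ∧ u ≠ v then p * (1 - q u) else 1 := by
  by_cases huv : u = v
  · subst huv
    have hst := hZ.source_state t le_rfl
    simp [iInd, hst]
  · have h0 : iInd Z u 0 = 0 := by
      have := hZ.init_uninfected u huv
      simp only [iInd, ite_eq_right_iff]
      intro h
      exact absurd (by rw [h]; simp [NodeState.IsInfected]) this
    rw [h0]
    by_cases hinf : Z u t = .infected
    · simp [iInd, hinf, huv]
    · simp [iInd, hinf]

/-- The full path-probability formula for any consistent infection path. -/
lemma pathProb_formula (hc : G.Connected) (ha : G.IsAcyclic)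
    (hloc : ∀ u : V, (G.neighborSet u).Finite) (hVefin : Ve.Finite)
    (hcons : ConsistentWith Ve t Z) (p : ℝ) (q : V → ℝ)
    (J : Finset V) (hJ : ∀ u, u ∈ J ↔ Z u t = NodeState.infected ∧ u ≠ v) :
    pathProb p q v t Z =
      (if v ∈ Ve then q v else 1 - q v) *
      (∏ u ∈ hVefin.toFinset.erase v, (p * q u)) *
      ((∏ u ∈ J, (p * (1 - q u))) * (1-p) ^ (Mval Z t)) := by
  classical
  set F : Finset V := (ball_finite hc hloc v (t+1)).toFinset with hF
  have hmemF : ∀ u : V, u ∈ F ↔ G.dist v u ≤ t + 1 := by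
    intro u
    rw [hF, Set.Finite.mem_toFinset]
    rfl
  have hsupp : Function.mulSupport
      (fun u => ∏ τ ∈ Finset.range t, transProb p (q u) (Z u τ) (Z u (τ+1))) ⊆ ↑F := by
    intro u hu
    rw [Function.mem_mulSupport] at hu
    by_contra hF2
    apply hu
    apply Finset.prod_eq_one
    intro τ hτ
    have hτ' := Finset.mem_range.1 hτ
    have hout : ¬ G.dist v u ≤ t + 1 := by
      rw [← hmemF]
      exact fun h => hF2 h
    rw [hZ.nonsusc_outside hc hout τ (by omega),
      hZ.nonsusc_outside hc hout (τ+1) (by omega)]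
    rfl
  unfold pathProb
  rw [finprod_eq_prod_of_mulSupport_subset _ hsupp]
  have hCeq : (if Z v 0 = NodeState.explicitN then q v else 1 - q v) =
      (if v ∈ Ve then q v else 1 - q v) := by
    by_cases h : v ∈ Ve
    · rw [if_pos ((hZ.source_explicit_iff hcons).2 h), if_pos h]
    · rw [if_neg (fun hh => h ((hZ.source_explicit_iff hcons).1 hh)), if_neg h]
  rw [hCeq]
  have hpernode : ∀ u ∈ F,
      ∏ τ ∈ Finset.range t, transProb p (q u) (Z u τ) (Z u (τ+1)) =
      (1-p) ^ (∑ τ ∈ Finset.range t, sInd Z u τ) *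
      ((if u ∈ Ve ∧ u ≠ v then p * q u else 1) *
       (if Z u t = NodeState.infected ∧ u ≠ v then p * (1 - q u) else 1)) := by
    intro u _
    rw [pernode_prod hZ p (q u) u, hZ.e_factor hcons p q u, hZ.i_factor hcons p q u]
    ring
  rw [Finset.prod_congr rfl hpernode]
  rw [Finset.prod_mul_distrib, Finset.prod_mul_distrib]
  -- the (1-p) part
  have hspart : (∏ u ∈ F, (1-p) ^ (∑ τ ∈ Finset.range t, sInd Z u τ)) =
      (1-p) ^ (Mval Z t) := by
    rw [Finset.prod_pow_eq_pow_sum]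
    congr 1
    rw [Finset.sum_comm]
    unfold Mval
    apply Finset.sum_congr rfl
    intro τ hτ
    have hτ' := Finset.mem_range.1 hτ
    have hpair_eq : pairSet Z τ = ↑(F.filter
        (fun u => Z u τ = NodeState.susceptible ∧ Z u (τ+1) = NodeState.susceptible)) := by
      ext u
      simp only [Finset.coe_filter, Set.mem_setOf_eq, pairSet, Finset.mem_coe]
      constructor
      · rintro ⟨h1, h2⟩
        refine ⟨?_, h1, h2⟩
        rw [hmemF]
        have := hZ.susc_dist hc (by omega : τ ≤ t) h1
        omega
      · rintro ⟨_, h1, h2⟩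
        exact ⟨h1, h2⟩
    rw [hpair_eq, Set.ncard_coe_finset, Finset.card_filter]
    apply Finset.sum_congr rfl
    intro u _
    rfl
  rw [hspart]
  -- the explicit part
  have hepart : (∏ u ∈ F, (if u ∈ Ve ∧ u ≠ v then p * q u else 1)) =
      ∏ u ∈ hVefin.toFinset.erase v, (p * q u) := by
    rw [← Finset.prod_filter]
    apply Finset.prod_congr _ (fun _ _ => rfl)
    ext u
    simp only [Finset.mem_filter, Finset.mem_erase, Set.Finite.mem_toFinset]
    constructor
    · rintro ⟨_, h1, h2⟩
      exact ⟨h2, h1⟩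
    · rintro ⟨h2, h1⟩
      refine ⟨?_, h1, h2⟩
      rw [hmemF]
      have := hZ.infected_dist_le hc t le_rfl u (hZ.ve_infected hcons h1)
      omega
  rw [hepart]
  -- the infected part
  have hipart : (∏ u ∈ F, (if Z u t = NodeState.infected ∧ u ≠ v then p * (1 - q u) else 1)) =
      ∏ u ∈ J, (p * (1 - q u)) := by
    rw [← Finset.prod_filter]
    apply Finset.prod_congr _ (fun _ _ => rfl)
    ext u
    simp only [Finset.mem_filter, hJ u]
    constructor
    · rintro ⟨_, h1, h2⟩
      exact ⟨h1, h2⟩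
    · rintro ⟨h1, h2⟩
      refine ⟨?_, h1, h2⟩
      rw [hmemF]
      have hinf : (Z u t).IsInfected := by rw [h1]; simp [NodeState.IsInfected]
      have := hZ.infected_dist_le hc t le_rfl u hinf
      omega
  rw [hipart]
  ring

end SILimited.IsInfectionPath

end PathFormula

section FinalAssembly

open SILimited TreeAux SimpleGraph

variable {V : Type*} {G : SimpleGraph V} {Ve : Set V} {v : V}

lemma pq_le {p qu : ℝ} (hp0 : 0 < p) (h2 : 2 - 1/p ≤ qu) : p * (1 - qu) ≤ 1 - p := by
  have h3 : p * (2 - 1/p) ≤ p * qu := mul_le_mul_of_nonneg_left h2 hp0.le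
  have h4 : p * (1/p) = 1 := by field_simp
  nlinarith

namespace SILimited.IsInfectionPath

variable {t : ℕ} {Z : V → ℕ → NodeState} (hZ : IsInfectionPath G v t Z)
include hZ

lemma dbar_le_time (hc : G.Connected) (hVene : Ve.Nonempty)
    (hcons : ConsistentWith Ve t Z) : dbar G v Ve ≤ t := by
  apply csSup_le (hVene.image _)
  rintro d ⟨w, hw, rfl⟩
  exact hZ.infected_dist_le hc t le_rfl w (hZ.ve_infected hcons hw)

/-- Decomposition of the final infected set. -/
lemma inf_decomp (hcons : ConsistentWith Ve t Z) :
    infNodes Z t = {u | Z u t = NodeState.infected ∧ u ≠ v} ∪ (Ve ∪ {v}) ∧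
    Disjoint {u | Z u t = NodeState.infected ∧ u ≠ v} (Ve ∪ {v}) := by
  constructor
  · ext u
    constructor
    · intro hu
      rcases (isInfected_iff _).1 hu with h | h
      · by_cases huv : u = v
        · exact Or.inr (Or.inr huv)
        · exact Or.inl ⟨h, huv⟩
      · exact Or.inr (Or.inl ((hcons u).1 h))
    · rintro (⟨h, _⟩ | h | h)
      · show (Z u t).IsInfected
        rw [h]; simp [NodeState.IsInfected]
      · exact hZ.ve_infected hcons h
      · rw [h]; exact hZ.source_infected_all le_rfl
  · rw [Set.disjoint_left]
    rintro u ⟨h1, h2⟩ (h | h)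
    · rw [(hcons u).2 h] at h1; simp at h1
    · exact h2 h

/-- Any node of the span other than the source is infected suitably early. -/
lemma span_inf_early (hc : G.Connected) (ha : G.IsAcyclic)
    (hloc : ∀ u : V, (G.neighborSet u).Finite) (hVefin : Ve.Finite)
    (hcons : ConsistentWith Ve t Z) {u : V}
    (hu : u ∈ spanVerts G (Ve ∪ {v})) (hune : u ≠ v) {σ : ℕ}
    (hσ : t - dbar G u (subtreeAway G u v ∩ spanVerts G (Ve ∪ {v})) ≤ σ) (hσt : σ ≤ t) :
    (Z u σ).IsInfected := by
  obtain ⟨⟨w, hwVe, hwA, hwd⟩, _⟩ := Dmax_spec hc ha hloc hVefin hu hune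
  have hwinf : (Z w t).IsInfected := hZ.ve_infected hcons hwVe
  have hbtw : TBtw G v u w := mem_away_iff.1 hwA.1
  have := hZ.infection_travel hc ha t le_rfl w hwinf u hbtw
  rw [hwd] at this
  exact hZ.infected_mono hσ hσt this

end SILimited.IsInfectionPath

/-- The optimality part of the main theorem. -/
lemma optimality (hc : G.Connected) (ha : G.IsAcyclic)
    (hloc : ∀ u : V, (G.neighborSet u).Finite)
    (hdeg : ∀ u : V, 2 ≤ (G.neighborSet u).ncard)
    {p : ℝ} (hp0 : 0 < p) (hp1 : p < 1)
    {q : V → ℝ} (hq0 : ∀ u, max 0 (2 - 1 / p) ≤ q u) (hq1 : ∀ u, q u ≤ 1)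
    (hVene : Ve.Nonempty) (hVefin : Ve.Finite)
    {X : V → ℕ → NodeState} (hX : IsLatestPath G Ve v (dbar G v Ve) X)
    {t' : ℕ} {Y : V → ℕ → NodeState} (hY : Y ∈ pathsFor G Ve v t') :
    pathProb p q v t' Y ≤ pathProb p q v (dbar G v Ve) X := by
  classical
  obtain ⟨hXpath, hXcons, hXout, hXfirst⟩ := hX
  obtain ⟨hYpath, hYcons⟩ := hY
  set ts : ℕ := dbar G v Ve with hts
  have htt : ts ≤ t' := hYpath.dbar_le_time hc hVene hYcons
  -- the two finsets of non-explicit infected nodes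
  have hJXfin : ({u | X u ts = NodeState.infected ∧ u ≠ v} : Set V).Finite := by
    apply (hXpath.infSet_finite hc hloc le_rfl).subset
    rintro u ⟨h1, _⟩
    show (X u ts).IsInfected
    rw [h1]; simp [NodeState.IsInfected]
  have hJYfin : ({u | Y u t' = NodeState.infected ∧ u ≠ v} : Set V).Finite := by
    apply (hYpath.infSet_finite hc hloc le_rfl).subset
    rintro u ⟨h1, _⟩
    show (Y u t').IsInfected
    rw [h1]; simp [NodeState.IsInfected]
  set JXF : Finset V := hJXfin.toFinset with hJXF
  set JYF : Finset V := hJYfin.toFinset with hJYF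
  have hJXmem : ∀ u, u ∈ JXF ↔ X u ts = NodeState.infected ∧ u ≠ v := by
    intro u; rw [hJXF, Set.Finite.mem_toFinset]; rfl
  have hJYmem : ∀ u, u ∈ JYF ↔ Y u t' = NodeState.infected ∧ u ≠ v := by
    intro u; rw [hJYF, Set.Finite.mem_toFinset]; rfl
  -- X's infected nodes are inside the span
  have hXspan : ∀ u τ, τ ≤ ts → (X u τ).IsInfected → u ∈ spanVerts G (Ve ∪ {v}) := by
    intro u τ hτ hinf
    by_contra hns
    exact hXout u hns τ hτ hinf
  -- JXF ⊆ JYF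
  have hsub : JXF ⊆ JYF := by
    intro u hu
    rw [hJXmem] at hu
    obtain ⟨h1, h2⟩ := hu
    have hinf : (X u ts).IsInfected := by rw [h1]; simp [NodeState.IsInfected]
    have hspan : u ∈ spanVerts G (Ve ∪ {v}) := hXspan u ts le_rfl hinf
    have hnVe : u ∉ Ve := by
      intro h
      rw [(hXcons u).2 h] at h1
      simp at h1
    have hYinf : (Y u t').IsInfected :=
      hYpath.span_inf_early hc ha hloc hVefin hYcons hspan h2 (by omega) le_rfl
    rw [hJYmem]
    refine ⟨?_, h2⟩
    rcases (isInfected_iff _).1 hYinf with h | h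
    · exact h
    · exact absurd ((hYcons u).1 h) hnVe
  -- boundary sums comparison
  have hbsum : (∑ τ ∈ Finset.range ts, (bdry G (infNodes X τ)).ncard) ≤
      ∑ τ ∈ Finset.range t', (bdry G (infNodes Y τ)).ncard := by
    have hstep : ∀ τ, τ < ts →
        (bdry G (infNodes X τ)).ncard ≤ (bdry G (infNodes Y (τ + (t' - ts)))).ncard := by
      intro τ hτ
      have hsubinf : infNodes X τ ⊆ infNodes Y (τ + (t' - ts)) := by
        intro u hu
        by_cases huv : u = v
        · rw [huv]
          exact hYpath.source_infected_all (by omega)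
        · have hspan : u ∈ spanVerts G (Ve ∪ {v}) := hXspan u τ (by omega) hu
          have hfirst := hXfirst u hspan huv
          have hle : ts - dbar G u (subtreeAway G u v ∩ spanVerts G (Ve ∪ {v})) ≤ τ := by
            rw [← hfirst]
            exact Nat.sInf_le hu
          have hDb := (Dmax_spec hc ha hloc hVefin hspan huv).2
          have hdvu : G.dist v u ≠ 0 := by
            rw [SimpleGraph.dist_ne_zero_iff_ne_and_reachable]
            exact ⟨fun h => huv h.symm, hc v u⟩
          exact hYpath.span_inf_early hc ha hloc hVefin hYcons hspan huv
            (by omega) (by omega)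
      exact bdry_mono hc ha hloc hdeg
        (hYpath.infSet_finite hc hloc (by omega))
        (hYpath.infSet_vclosed hc ha (by omega)) _ _ rfl
        (hXpath.infSet_vclosed hc ha (by omega)) hsubinf
    calc (∑ τ ∈ Finset.range ts, (bdry G (infNodes X τ)).ncard)
        ≤ ∑ τ ∈ Finset.range ts, (bdry G (infNodes Y (τ + (t' - ts)))).ncard :=
          Finset.sum_le_sum (fun τ hτ => hstep τ (Finset.mem_range.1 hτ))
      _ = ∑ σ ∈ Finset.Ico (t' - ts) t', (bdry G (infNodes Y σ)).ncard := by
          rw [Finset.sum_Ico_eq_sum_range]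
          have h1 : t' - (t' - ts) = ts := by omega
          rw [h1]
          apply Finset.sum_congr rfl
          intro τ _
          rw [Nat.add_comm]
      _ ≤ ∑ τ ∈ Finset.range t', (bdry G (infNodes Y τ)).ncard := by
          apply Finset.sum_le_sum_of_subset
          rw [Finset.range_eq_Ico]
          exact Finset.Ico_subset_Ico (by omega) le_rfl
  -- cardinality bookkeeping
  have hdecX := hXpath.inf_decomp hXcons
  have hdecY := hYpath.inf_decomp hYcons
  have hVvfin : (Ve ∪ {v} : Set V).Finite := hVefin.union (Set.finite_singleton v)
  have hcardX : (infNodes X ts).ncard = JXF.card + (Ve ∪ {v} : Set V).ncard := by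
    rw [hdecX.1, Set.ncard_union_eq hdecX.2 hJXfin hVvfin, ← Set.ncard_coe_finset JXF,
      hJXF, Set.Finite.coe_toFinset]
  have hcardY : (infNodes Y t').ncard = JYF.card + (Ve ∪ {v} : Set V).ncard := by
    rw [hdecY.1, Set.ncard_union_eq hdecY.2 hJYfin hVvfin, ← Set.ncard_coe_finset JYF,
      hJYF, Set.Finite.coe_toFinset]
  have hMX := hXpath.M_identity hc ha hloc
  have hMY := hYpath.M_identity hc ha hloc
  have hcard_sub : JXF.card + (JYF \ JXF).card = JYF.card := by
    rw [Finset.card_sdiff_of_subset hsub]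
    have := Finset.card_le_card hsub
    omega
  have hMineq : Mval X ts ≤ Mval Y t' + (JYF \ JXF).card := by omega
  -- now the numeric comparison
  rw [hXpath.pathProb_formula hc ha hloc hVefin hXcons p q JXF hJXmem,
    hYpath.pathProb_formula hc ha hloc hVefin hYcons p q JYF hJYmem]
  have hq0' : ∀ u, (0:ℝ) ≤ q u := fun u => le_trans (le_max_left _ _) (hq0 u)
  have hq2 : ∀ u, 2 - 1/p ≤ q u := fun u => le_trans (le_max_right _ _) (hq0 u)
  have hCnn : (0:ℝ) ≤ (if v ∈ Ve then q v else 1 - q v) := by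
    by_cases h : v ∈ Ve
    · simpa [h] using hq0' v
    · simp only [h, if_false]
      have := hq1 v
      linarith
  have hPnn : (0:ℝ) ≤ ∏ u ∈ hVefin.toFinset.erase v, (p * q u) :=
    Finset.prod_nonneg (fun u _ => mul_nonneg hp0.le (hq0' u))
  have hfnn : ∀ u : V, (0:ℝ) ≤ p * (1 - q u) := fun u =>
    mul_nonneg hp0.le (by have := hq1 u; linarith)
  have h1p : (0:ℝ) ≤ 1 - p := by linarith
  have h1p1 : (1:ℝ) - p ≤ 1 := by linarith
  have hkey : (∏ u ∈ JYF, (p * (1 - q u))) * (1-p)^(Mval Y t') ≤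
      (∏ u ∈ JXF, (p * (1 - q u))) * (1-p)^(Mval X ts) := by
    have hprodsplit : (∏ u ∈ JYF, (p * (1 - q u))) =
        (∏ u ∈ JYF \ JXF, (p * (1 - q u))) * ∏ u ∈ JXF, (p * (1 - q u)) :=
      (Finset.prod_sdiff hsub).symm
    rw [hprodsplit]
    have hbound : (∏ u ∈ JYF \ JXF, (p * (1 - q u))) ≤ (1-p) ^ (JYF \ JXF).card := by
      rw [← Finset.prod_const]
      exact Finset.prod_le_prod (fun u _ => hfnn u) (fun u _ => pq_le hp0 (hq2 u))
    calc (∏ u ∈ JYF \ JXF, (p * (1 - q u))) * (∏ u ∈ JXF, (p * (1 - q u))) *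
          (1-p)^(Mval Y t')
        ≤ (1-p) ^ (JYF \ JXF).card * (∏ u ∈ JXF, (p * (1 - q u))) *
          (1-p)^(Mval Y t') :=
          mul_le_mul_of_nonneg_right (mul_le_mul_of_nonneg_right hbound
            (Finset.prod_nonneg fun u _ => hfnn u)) (pow_nonneg h1p _)
      _ = (∏ u ∈ JXF, (p * (1 - q u))) * (1-p) ^ ((JYF \ JXF).card + Mval Y t') := by
          rw [pow_add]; ring
      _ ≤ (∏ u ∈ JXF, (p * (1 - q u))) * (1-p) ^ (Mval X ts) :=
          mul_le_mul_of_nonneg_left (pow_le_pow_of_le_one h1p h1p1 (by omega))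
            (Finset.prod_nonneg fun u _ => hfnn u)
  exact mul_le_mul_of_nonneg_left hkey (mul_nonneg hCnn hPnn)

end FinalAssembly

section Feasibility

open SILimited TreeAux SimpleGraph

variable {V : Type*}

/-- The "earliest" infection path: infection spreads along the span at full speed. -/
noncomputable def earliestPath (G : SimpleGraph V) (Ve : Set V) (v : V) :
    V → ℕ → NodeState := fun u τ =>
  if u ∈ spanVerts G (Ve ∪ {v}) ∧ G.dist v u ≤ τ then
    (if u ∈ Ve then NodeState.explicitN else NodeState.infected)
  else if ∃ w, G.Adj u w ∧ w ∈ spanVerts G (Ve ∪ {v}) ∧ G.dist v w ≤ τ then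
    NodeState.susceptible
  else NodeState.nonsusceptible

variable {G : SimpleGraph V} {Ve : Set V} {v : V}

lemma earliest_inf_iff {u : V} {τ : ℕ} :
    (earliestPath G Ve v u τ).IsInfected ↔
      u ∈ spanVerts G (Ve ∪ {v}) ∧ G.dist v u ≤ τ := by
  classical
  unfold earliestPath
  by_cases h1 : u ∈ spanVerts G (Ve ∪ {v}) ∧ G.dist v u ≤ τ
  · rw [if_pos h1]
    by_cases h2 : u ∈ Ve
    · rw [if_pos h2]; exact iff_of_true trivial h1
    · rw [if_neg h2]; exact iff_of_true trivial h1
  · rw [if_neg h1]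
    by_cases h2 : ∃ w, G.Adj u w ∧ w ∈ spanVerts G (Ve ∪ {v}) ∧ G.dist v w ≤ τ
    · rw [if_pos h2]; exact iff_of_false (fun h => h) h1
    · rw [if_neg h2]; exact iff_of_false (fun h => h) h1

lemma earliest_exp_iff {u : V} {τ : ℕ} :
    earliestPath G Ve v u τ = NodeState.explicitN ↔
      u ∈ spanVerts G (Ve ∪ {v}) ∧ G.dist v u ≤ τ ∧ u ∈ Ve := by
  classical
  unfold earliestPath
  by_cases h1 : u ∈ spanVerts G (Ve ∪ {v}) ∧ G.dist v u ≤ τ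
  · rw [if_pos h1]
    by_cases h2 : u ∈ Ve
    · rw [if_pos h2]; exact iff_of_true rfl ⟨h1.1, h1.2, h2⟩
    · rw [if_neg h2]
      exact iff_of_false (fun hh => NodeState.noConfusion hh) (fun hh => h2 hh.2.2)
  · rw [if_neg h1]
    by_cases h2 : ∃ w, G.Adj u w ∧ w ∈ spanVerts G (Ve ∪ {v}) ∧ G.dist v w ≤ τ
    · rw [if_pos h2]
      exact iff_of_false (fun hh => NodeState.noConfusion hh) (fun hh => h1 ⟨hh.1, hh.2.1⟩)
    · rw [if_neg h2]
      exact iff_of_false (fun hh => NodeState.noConfusion hh) (fun hh => h1 ⟨hh.1, hh.2.1⟩)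

lemma earliest_infected_state_iff {u : V} {τ : ℕ} :
    earliestPath G Ve v u τ = NodeState.infected ↔
      u ∈ spanVerts G (Ve ∪ {v}) ∧ G.dist v u ≤ τ ∧ u ∉ Ve := by
  classical
  unfold earliestPath
  by_cases h1 : u ∈ spanVerts G (Ve ∪ {v}) ∧ G.dist v u ≤ τ
  · rw [if_pos h1]
    by_cases h2 : u ∈ Ve
    · rw [if_pos h2]
      exact iff_of_false (fun hh => NodeState.noConfusion hh) (fun hh => hh.2.2 h2)
    · rw [if_neg h2]; exact iff_of_true rfl ⟨h1.1, h1.2, h2⟩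
  · rw [if_neg h1]
    by_cases h2 : ∃ w, G.Adj u w ∧ w ∈ spanVerts G (Ve ∪ {v}) ∧ G.dist v w ≤ τ
    · rw [if_pos h2]
      exact iff_of_false (fun hh => NodeState.noConfusion hh) (fun hh => h1 ⟨hh.1, hh.2.1⟩)
    · rw [if_neg h2]
      exact iff_of_false (fun hh => NodeState.noConfusion hh) (fun hh => h1 ⟨hh.1, hh.2.1⟩)

lemma earliest_susc_iff {u : V} {τ : ℕ} :
    earliestPath G Ve v u τ = NodeState.susceptible ↔
      ¬(u ∈ spanVerts G (Ve ∪ {v}) ∧ G.dist v u ≤ τ) ∧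
      (∃ w, G.Adj u w ∧ w ∈ spanVerts G (Ve ∪ {v}) ∧ G.dist v w ≤ τ) := by
  classical
  unfold earliestPath
  by_cases h1 : u ∈ spanVerts G (Ve ∪ {v}) ∧ G.dist v u ≤ τ
  · rw [if_pos h1]
    by_cases h2 : u ∈ Ve
    · rw [if_pos h2]
      exact iff_of_false (fun hh => NodeState.noConfusion hh) (fun hh => hh.1 h1)
    · rw [if_neg h2]
      exact iff_of_false (fun hh => NodeState.noConfusion hh) (fun hh => hh.1 h1)
  · rw [if_neg h1]
    by_cases h2 : ∃ w, G.Adj u w ∧ w ∈ spanVerts G (Ve ∪ {v}) ∧ G.dist v w ≤ τ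
    · rw [if_pos h2]; exact iff_of_true rfl ⟨h1, h2⟩
    · rw [if_neg h2]
      exact iff_of_false (fun hh => NodeState.noConfusion hh) (fun hh => h2 hh.2)

lemma earliest_mem_pathsFor (hc : G.Connected) (ha : G.IsAcyclic) (hVefin : Ve.Finite) :
    earliestPath G Ve v ∈ pathsFor G Ve v (dbar G v Ve) := by
  classical
  constructor
  · constructor
    · -- source_infected
      rw [earliest_inf_iff]
      exact ⟨v_mem_span, by simp⟩
    · -- init_uninfected
      intro u hne hinf
      rw [earliest_inf_iff] at hinf
      have : G.dist v u = 0 := by omega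
      exact hne ((hc.dist_eq_zero_iff).1 this).symm
    · -- susceptible_iff
      intro u τ hτ hni
      rw [earliest_inf_iff] at hni
      rw [earliest_susc_iff]
      constructor
      · rintro ⟨_, w, hadj, hw, hdw⟩
        exact ⟨w, hadj, earliest_inf_iff.2 ⟨hw, hdw⟩⟩
      · rintro ⟨w, hadj, hwinf⟩
        rw [earliest_inf_iff] at hwinf
        exact ⟨hni, w, hadj, hwinf⟩
    · -- infected_stays
      intro u τ _ h
      rw [earliest_infected_state_iff] at h ⊢
      exact ⟨h.1, by omega, h.2.2⟩
    · -- explicit_stays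
      intro u τ _ h
      rw [earliest_exp_iff] at h ⊢
      exact ⟨h.1, by omega, h.2.2⟩
    · -- infect_from_susceptible
      intro u τ _ hinf
      rw [earliest_inf_iff] at hinf
      obtain ⟨hspan, hdist⟩ := hinf
      by_cases hle : G.dist v u ≤ τ
      · left
        rw [earliest_inf_iff]
        exact ⟨hspan, hle⟩
      · right
        have hne : u ≠ v := by
          intro h
          rw [h] at hle
          rw [show G.dist v v = 0 from by simp] at hle
          omega
        obtain ⟨w, hadj, hdw, hbtw⟩ := exists_parent hc hne
        have hwspan : w ∈ spanVerts G (Ve ∪ {v}) := span_vclosed hc ha hspan hbtw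
        rw [earliest_susc_iff]
        exact ⟨by tauto, w, hadj, hwspan, by omega⟩
  · -- ConsistentWith
    intro u
    rw [earliest_exp_iff]
    constructor
    · tauto
    · intro h
      exact ⟨mem_span_of_mem (Or.inl h), dist_le_dbar hVefin (Or.inl h), h⟩

end Feasibility


open SILimited

/-- If `G` is a tree, then for any node `v`, the most likely elapsed time is
`d̄(v, Ve)`, and a most likely infection path for `v` — maximizing `P_v` jointly over all
feasible elapsed times `t ∈ 𝒯_v` and all consistent infection paths — is the latest infection
path for `(v, d̄(v, Ve))`. -/
theorem latest_path_at_infection_range_is_most_likely_for_v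
    {V : Type*} [Infinite V] (G : SimpleGraph V) (hT : G.IsTree)
    (hloc : ∀ u : V, (G.neighborSet u).Finite)
    (hdeg : ∀ u : V, 2 ≤ (G.neighborSet u).ncard)
    (p : ℝ) (hp0 : 0 < p) (hp1 : p < 1)
    (q : V → ℝ) (hq0 : ∀ u, max 0 (2 - 1 / p) ≤ q u) (hq1 : ∀ u, q u ≤ 1)
    (Ve : Set V) (hVene : Ve.Nonempty) (hVefin : Ve.Finite)
    (v : V) :
    dbar G v Ve ∈ feasibleTimes G Ve v ∧
    ∀ X, IsLatestPath G Ve v (dbar G v Ve) X →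
      ∀ t' ∈ feasibleTimes G Ve v, ∀ Y ∈ pathsFor G Ve v t',
        pathProb p q v t' Y ≤ pathProb p q v (dbar G v Ve) X := by
  classical
  have hc : G.Connected := hT.isConnected
  have ha : G.IsAcyclic := hT.IsAcyclic
  constructor
  · exact ⟨earliestPath G Ve v, earliest_mem_pathsFor hc ha hVefin⟩
  · intro X hX t' _ Y hY
    exact optimality hc ha hloc hdeg hp0 hp1 hq0 hq1 hVene hVefin hX hY
end

section
/- Let H be a finite tree and V_e a nonempty subset of its vertices such that H is the minimal connected subtree spanning V_e. Suppose u and v are neighboring nodes in H with d̄(v, V_e) < d̄(u, V_e). Then every node l ∈ V_e achieving the maximum distance from u, i.e., every l ∈ argmax_{x ∈ V_e} d(u,x), lies in the subtree T_v(u;H). -/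
/-- Let `H` be a finite tree and `Ve` a nonempty subset of its vertices such that
`H` is the minimal connected subtree spanning `Ve` (equivalently, every leaf of `H` is in `Ve`).
If `u` and `v` are neighboring nodes of `H` with `d̄(v,Ve) < d̄(u,Ve)`, then every `l ∈ Ve`
achieving the maximum distance from `u` lies in the subtree `T_v(u;H)` (the component of `v`
after removing the edge `uv`, i.e., the nodes `l` with `d(u,l) = d(v,l) + 1`). -/
theorem farthest_explicit_nodes_in_neighbor_subtree
    {V : Type*} [Fintype V] (H : SimpleGraph V) (hT : H.IsTree)
    (Ve : Finset V) (hVe : Ve.Nonempty)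
    (hmin : ∀ w : V, (H.neighborSet w).ncard ≤ 1 → w ∈ Ve)
    (u v : V) (hadj : H.Adj u v)
    (hlt : Ve.sup (H.dist v) < Ve.sup (H.dist u)) :
    ∀ l ∈ Ve, H.dist u l = Ve.sup (H.dist u) → H.dist u l = H.dist v l + 1 := by
  intro l hl hmax
  have hconn := hT.isConnected
  have h1 : H.dist u l ≤ H.dist u v + H.dist v l := hconn.dist_triangle
  have h2 : H.dist u v = 1 := (SimpleGraph.dist_eq_one_iff_adj).mpr hadj
  have h3 : H.dist v l ≤ Ve.sup (H.dist v) := Finset.le_sup hl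
  omega
end

section
/- Let H be a finite tree and V_e a nonempty subset of its vertices such that H is the minimal connected subtree spanning V_e. Suppose u and v are neighboring nodes in H with d̄(v, V_e) < d̄(u, V_e). Then d̄(v, V_e) = d̄(u, V_e) − 1, and there exists a node l ∈ V_e lying in the subtree T_v(u;H) such that d(v,l) = d̄(v, V_e). -/
/-- Let `H` be a finite tree and `Ve` a nonempty subset of its vertices such that
`H` is the minimal connected subtree spanning `Ve` (equivalently, every leaf of `H` is in `Ve`).
If `u` and `v` are neighboring nodes of `H` with `d̄(v,Ve) < d̄(u,Ve)`, then
`d̄(v,Ve) = d̄(u,Ve) − 1`, and there exists `l ∈ Ve` in the subtree `T_v(u;H)` (i.e., with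
`d(u,l) = d(v,l) + 1`) such that `d(v,l) = d̄(v,Ve)`. -/
theorem infection_range_of_neighbor_pred
    {V : Type*} [Fintype V] (H : SimpleGraph V) (hT : H.IsTree)
    (Ve : Finset V) (hVe : Ve.Nonempty)
    (hmin : ∀ w : V, (H.neighborSet w).ncard ≤ 1 → w ∈ Ve)
    (u v : V) (hadj : H.Adj u v)
    (hlt : Ve.sup (H.dist v) < Ve.sup (H.dist u)) :
    Ve.sup (H.dist v) = Ve.sup (H.dist u) - 1 ∧
      ∃ l ∈ Ve, H.dist u l = H.dist v l + 1 ∧ H.dist v l = Ve.sup (H.dist v) := by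
  obtain ⟨l, hl, hsup⟩ := Finset.exists_mem_eq_sup Ve hVe (H.dist u)
  have hconn : H.Connected := hT.isConnected
  have hd1 : H.dist u v = 1 := SimpleGraph.dist_eq_one_iff_adj.mpr hadj
  have htri : H.dist u l ≤ H.dist u v + H.dist v l := hconn.dist_triangle
  have hvl : H.dist v l ≤ Ve.sup (H.dist v) := Finset.le_sup hl
  have h1 : Ve.sup (H.dist v) = Ve.sup (H.dist u) - 1 := by omega
  exact ⟨h1, l, hl, by omega, by omega⟩
end

section
/- Let H be a finite tree, V_e a nonempty subset of its vertices with H the minimal connected subtree spanning V_e, and suppose ŝ is the unique Jordan center of V_e in H. Then for any simple path (ŝ, v_1, v_2, …, v_m) in H with m ≥ 1, the infection ranges strictly increase along the path: d̄(ŝ, V_e) < d̄(v_1, V_e) < … < d̄(v_m, V_e). -/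
open SimpleGraph

private lemma tree_path_length {V : Type*} {H : SimpleGraph V} (hT : H.IsTree)
    {u x : V} (p : H.Walk u x) (hp : p.IsPath) : p.length = H.dist u x := by
  obtain ⟨q, hq, hql⟩ := hT.isConnected.exists_path_of_dist u x
  obtain ⟨r, hr1, hr2⟩ := hT.existsUnique_path u x
  rw [hr2 p hp, ← hr2 q hq, hql]

private lemma tree_notMem_of_le {V : Type*} {H : SimpleGraph V} (hT : H.IsTree)
    {u w x : V} (hne : u ≠ w) {p : H.Walk w x} (hp : p.IsPath)
    (hle : H.dist w x ≤ H.dist u x) : u ∉ p.support := by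
  classical
  intro hmem
  have hsplit := p.take_spec hmem
  have h1 : (p.dropUntil u hmem).length = H.dist u x :=
    tree_path_length hT _ (hp.dropUntil hmem)
  have h2 : (p.takeUntil u hmem).length ≠ 0 := fun h0 =>
    hne (SimpleGraph.Walk.eq_of_length_eq_zero h0).symm
  have h3 : p.length = (p.takeUntil u hmem).length + (p.dropUntil u hmem).length := by
    conv_lhs => rw [← hsplit]
    rw [SimpleGraph.Walk.length_append]
  have h4 : p.length = H.dist w x := tree_path_length hT p hp
  omega

private lemma tree_adj_dist_ne {V : Type*} {H : SimpleGraph V} (hT : H.IsTree)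
    {u v : V} (h : H.Adj u v) (x : V) : H.dist u x ≠ H.dist v x := by
  intro heq
  obtain ⟨q, hq, hql⟩ := hT.isConnected.exists_path_of_dist v x
  have hns : u ∉ q.support := tree_notMem_of_le hT h.ne hq heq.ge
  have := tree_path_length hT (SimpleGraph.Walk.cons h q) (hq.cons hns)
  rw [SimpleGraph.Walk.length_cons, hql] at this
  omega

private lemma tree_dist_le_adj {V : Type*} {H : SimpleGraph V} (hT : H.IsTree)
    {u v : V} (h : H.Adj u v) (x : V) : H.dist u x ≤ H.dist v x + 1 := by
  obtain ⟨q, hq, hql⟩ := hT.isConnected.exists_path_of_dist v x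
  have := SimpleGraph.dist_le (SimpleGraph.Walk.cons h q)
  rw [SimpleGraph.Walk.length_cons, hql] at this
  exact this

private lemma tree_gradient_unique {V : Type*} {H : SimpleGraph V} (hT : H.IsTree)
    {u w v x : V} (huw : H.Adj u w) (huv : H.Adj u v)
    (hw : H.dist w x + 1 = H.dist u x) (hv : H.dist v x + 1 = H.dist u x) : w = v := by
  obtain ⟨p, hp, hpl⟩ := hT.isConnected.exists_path_of_dist w x
  obtain ⟨q, hq, hql⟩ := hT.isConnected.exists_path_of_dist v x
  have h1 : u ∉ p.support := tree_notMem_of_le hT huw.ne hp (by omega)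
  have h2 : u ∉ q.support := tree_notMem_of_le hT huv.ne hq (by omega)
  obtain ⟨r, hr1, hr2⟩ := hT.existsUnique_path u x
  have heq : SimpleGraph.Walk.cons huw p = SimpleGraph.Walk.cons huv q :=
    (hr2 _ (hp.cons h1)).trans (hr2 _ (hq.cons h2)).symm
  have hs := congrArg SimpleGraph.Walk.support heq
  rw [SimpleGraph.Walk.support_cons, SimpleGraph.Walk.support_cons,
    p.support_eq_cons, q.support_eq_cons] at hs
  simp only [List.cons.injEq] at hs
  exact hs.2.1

private lemma tree_step {V : Type*} {H : SimpleGraph V} (hT : H.IsTree)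
    (Ve : Finset V) (hVe : Ve.Nonempty) {w u v : V}
    (hwu : H.Adj w u) (huv : H.Adj u v) (hwv : w ≠ v)
    (hlt : Ve.sup (H.dist w) < Ve.sup (H.dist u)) :
    Ve.sup (H.dist u) < Ve.sup (H.dist v) := by
  obtain ⟨x, hx, hux⟩ := Finset.exists_mem_eq_sup Ve hVe (H.dist u)
  rcases le_or_gt (H.dist u x) (H.dist v x) with h | h
  · have hne := tree_adj_dist_ne hT huv x
    calc Ve.sup (H.dist u) = H.dist u x := hux
      _ < H.dist v x := lt_of_le_of_ne h hne
      _ ≤ Ve.sup (H.dist v) := Finset.le_sup hx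
  · exfalso
    have h1 : H.dist v x + 1 = H.dist u x := by
      have := tree_dist_le_adj hT huv x; omega
    have h2 : H.dist w x + 1 = H.dist u x := by
      have hle : H.dist w x ≤ Ve.sup (H.dist w) := Finset.le_sup hx
      have := tree_dist_le_adj hT hwu.symm x
      rw [hux] at hlt
      omega
    exact hwv (tree_gradient_unique hT hwu.symm huv h2 h1)

/-- Let `H` be a finite tree, `Ve` a nonempty subset of its vertices with `H`
the minimal connected subtree spanning `Ve` (equivalently, every leaf of `H` is in `Ve`), and
suppose `ŝ` is the unique Jordan center of `Ve` in `H`. Then along any simple path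
`(ŝ, v₁, …, v_m)` in `H` with `m ≥ 1`, the infection ranges strictly increase:
`d̄(ŝ,Ve) < d̄(v₁,Ve) < … < d̄(v_m,Ve)`. -/
theorem infection_range_strictly_increasing_from_unique_Jordan_center
    {V : Type*} [Fintype V] (H : SimpleGraph V) (hT : H.IsTree)
    (Ve : Finset V) (hVe : Ve.Nonempty)
    (hmin : ∀ w : V, (H.neighborSet w).ncard ≤ 1 → w ∈ Ve)
    (shat : V)
    (hJordan : ∀ w : V, Ve.sup (H.dist shat) ≤ Ve.sup (H.dist w))
    (huniq : ∀ w : V, Ve.sup (H.dist w) = Ve.sup (H.dist shat) → w = shat)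
    (m : ℕ) (hm : 1 ≤ m) (f : Fin (m + 1) → V)
    (hf0 : f 0 = shat)
    (hadj : ∀ i : Fin m, H.Adj (f i.castSucc) (f i.succ))
    (hinj : Function.Injective f) :
    ∀ i : Fin m, Ve.sup (H.dist (f i.castSucc)) < Ve.sup (H.dist (f i.succ)) := by
  suffices hmain : ∀ n (hn : n < m),
      Ve.sup (H.dist (f ⟨n, by omega⟩)) < Ve.sup (H.dist (f ⟨n + 1, by omega⟩)) by
    intro i
    have := hmain i.val i.isLt
    simpa [Fin.castSucc, Fin.castAdd, Fin.castLE, Fin.succ] using this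
  intro n
  induction n with
  | zero =>
    intro hn
    have h0 : f ⟨0, by omega⟩ = shat := hf0
    rw [h0]
    rcases lt_or_eq_of_le (hJordan (f ⟨1, by omega⟩)) with h | h
    · exact h
    · exfalso
      have h1 := huniq _ h.symm
      rw [← hf0] at h1
      have h2 := hinj h1
      simp [Fin.ext_iff] at h2
  | succ n ih =>
    intro hn
    have hn' : n < m := by omega
    have ihn := ih hn'
    have hwu : H.Adj (f ⟨n, by omega⟩) (f ⟨n + 1, by omega⟩) := by
      simpa using hadj ⟨n, hn'⟩
    have huv : H.Adj (f ⟨n + 1, by omega⟩) (f ⟨n + 2, by omega⟩) := by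
      simpa using hadj ⟨n + 1, hn⟩
    have hwv : f ⟨n, by omega⟩ ≠ f (⟨n + 2, by omega⟩ : Fin (m + 1)) := by
      intro h
      have := hinj h
      simp [Fin.ext_iff] at this
    exact tree_step hT Ve hVe hwu huv hwv ihn
end

section
/- Let H be a finite tree with more than 2 vertices that is the minimal connected subtree spanning a nonempty vertex set V_e. A vertex v of H is a Jordan center of V_e if and only if (i) v has degree at least 2 in H, and (ii) letting, for each neighbor u of v in H, ℓ_u = 1 + max_{x ∈ T_u(v;H)} d(u,x) be the maximum length of a path in H whose first edge is (v,u), the difference between the largest and the second largest values among {ℓ_u : u a neighbor of v in H} is at most 1. -/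
/-- `ℓ_u`: one plus the maximum distance from `u` to a vertex of the subtree `T_u(v;H)` of the
tree `H` rooted at `u` obtained by removing the edge between `u` and `v` (its vertices are the
`x` with `d(v,x) = d(u,x) + 1`); this is the maximum length of a path in `H` whose first edge
is `(v,u)`. -/
noncomputable def pathLenFrom {V : Type*} [Fintype V] (H : SimpleGraph V) (v u : V) : ℕ :=
  1 + (Finset.univ.filter (fun x : V => H.dist v x = H.dist u x + 1)).sup (H.dist u)

set_option linter.unusedSectionVars false

open SimpleGraph Finset

namespace JordanAux

variable {V : Type*} [DecidableEq V] {H : SimpleGraph V}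

/-- In a tree, every path between two vertices has length equal to the distance. -/
lemma path_length_eq_dist (hT : H.IsTree) {x y : V} {p : H.Walk x y} (hp : p.IsPath) :
    p.length = H.dist x y := by
  obtain ⟨q, hq, hql⟩ := hT.isConnected.exists_path_of_dist x y
  rw [(hT.existsUnique_path x y).unique hp hq, hql]

lemma dist_add_of_mem_support (hT : H.IsTree) {a b w : V} {p : H.Walk a b}
    (hp : p.IsPath) (hw : w ∈ p.support) :
    H.dist a b = H.dist a w + H.dist w b := by
  have h1 := path_length_eq_dist hT (hp.takeUntil hw)
  have h2 := path_length_eq_dist hT (hp.dropUntil hw)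
  have h3 : (p.takeUntil w hw).length + (p.dropUntil w hw).length = p.length := by
    rw [← SimpleGraph.Walk.length_append, p.take_spec hw]
  rw [← path_length_eq_dist hT hp, ← h3, h1, h2]

lemma second_vertex (hT : H.IsTree) {v u x : V} (h : H.Adj v u)
    (hx : H.dist v x = H.dist u x + 1) {p : H.Walk v x} (hp : p.IsPath) :
    p.getVert 1 = u := by
  obtain ⟨q, hq, _⟩ := hT.isConnected.exists_path_of_dist u x
  have hv : v ∉ q.support := by
    intro hv
    have hsplit := dist_add_of_mem_support hT hq hv
    have h1 : H.dist u v = 1 := dist_eq_one_iff_adj.mpr h.symm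
    omega
  have hcons : (SimpleGraph.Walk.cons h q).IsPath := hq.cons hv
  rw [(hT.existsUnique_path v x).unique hp hcons]
  simp [SimpleGraph.Walk.getVert_cons_succ]

lemma exists_branch (hT : H.IsTree) {v x : V} (hne : x ≠ v) :
    ∃ u, H.Adj v u ∧ H.dist v x = H.dist u x + 1 := by
  obtain ⟨p, hp, hl⟩ := hT.isConnected.exists_path_of_dist v x
  have hpos : 0 < p.length := by
    rw [hl]; exact hT.isConnected.pos_dist_of_ne (Ne.symm hne)
  have hadj : H.Adj v (p.getVert 1) := by
    simpa using p.adj_getVert_succ (i := 0) hpos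
  refine ⟨p.getVert 1, hadj, ?_⟩
  have hmem : p.getVert 1 ∈ p.support :=
    SimpleGraph.Walk.mem_support_iff_exists_getVert.mpr ⟨1, rfl, hpos⟩
  have hsplit := dist_add_of_mem_support hT hp hmem
  have h1 : H.dist v (p.getVert 1) = 1 := dist_eq_one_iff_adj.mpr hadj
  omega

lemma branch_unique (hT : H.IsTree) {v u u' x : V} (h : H.Adj v u) (h' : H.Adj v u')
    (hx : H.dist v x = H.dist u x + 1) (hx' : H.dist v x = H.dist u' x + 1) : u = u' := by
  obtain ⟨p, hp, _⟩ := hT.isConnected.exists_path_of_dist v x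
  rw [← second_vertex hT h hx hp, ← second_vertex hT h' hx' hp]

lemma second_vertex_eq_of_mem (hT : H.IsTree) {v x w : V} {p : H.Walk v x}
    (hp : p.IsPath) (hw : w ∈ p.support) (hwv : w ≠ v) {s : H.Walk v w} (hs : s.IsPath) :
    p.getVert 1 = s.getVert 1 := by
  have ht : (p.takeUntil w hw).IsPath := hp.takeUntil hw
  have hse : s = p.takeUntil w hw := (hT.existsUnique_path v w).unique hs ht
  have hlen : 0 < (p.takeUntil w hw).length := by
    rw [path_length_eq_dist hT ht]
    exact hT.isConnected.pos_dist_of_ne (Ne.symm hwv)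
  have hspec := p.take_spec hw
  rw [hse]
  by_cases h1 : 1 < (p.takeUntil w hw).length
  · conv_lhs => rw [← hspec]
    rw [SimpleGraph.Walk.getVert_append]
    simp [h1]
  · have hl1 : (p.takeUntil w hw).length = 1 := by omega
    have hgv : (p.takeUntil w hw).getVert 1 = w := by
      rw [← hl1]; exact SimpleGraph.Walk.getVert_length _
    rw [hgv]
    conv_lhs => rw [← hspec]
    rw [SimpleGraph.Walk.getVert_append]
    simp [hl1]

lemma dist_eq_add_of_branches (hT : H.IsTree) {v u u' x y : V} (h : H.Adj v u)
    (h' : H.Adj v u') (huu' : u ≠ u')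
    (hx : H.dist v x = H.dist u x + 1) (hy : H.dist v y = H.dist u' y + 1) :
    H.dist x y = H.dist x v + H.dist v y := by
  obtain ⟨q, hq, hql⟩ := hT.isConnected.exists_path_of_dist x v
  obtain ⟨r, hr, hrl⟩ := hT.isConnected.exists_path_of_dist v y
  have hdisj : ∀ w, w ∈ q.support → w ∈ r.support.tail → False := by
    intro w hwq hwr
    have hwr' : w ∈ r.support := by
      rw [r.support_eq_cons]; exact List.mem_cons_of_mem _ hwr
    have hnd := (SimpleGraph.Walk.isPath_def r).mp hr
    rw [r.support_eq_cons] at hnd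
    have hvnotin : v ∉ r.support.tail := (List.nodup_cons.mp hnd).1
    have hwv : w ≠ v := fun e => hvnotin (e ▸ hwr)
    obtain ⟨s, hs, _⟩ := hT.isConnected.exists_path_of_dist v w
    have hq' : q.reverse.IsPath := hq.reverse
    have hwq' : w ∈ q.reverse.support := by
      rwa [SimpleGraph.Walk.support_reverse, List.mem_reverse]
    have e1 : q.reverse.getVert 1 = s.getVert 1 :=
      second_vertex_eq_of_mem hT hq' hwq' hwv hs
    have e2 : q.reverse.getVert 1 = u := second_vertex hT h hx hq'
    have e3 : r.getVert 1 = s.getVert 1 := second_vertex_eq_of_mem hT hr hwr' hwv hs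
    have e4 : r.getVert 1 = u' := second_vertex hT h' hy hr
    exact huu' (by rw [← e2, e1, ← e3, e4])
  have hap : (q.append r).IsPath := by
    rw [SimpleGraph.Walk.isPath_def, SimpleGraph.Walk.support_append]
    refine List.Nodup.append ((SimpleGraph.Walk.isPath_def q).mp hq) ?_ hdisj
    have hnd := (SimpleGraph.Walk.isPath_def r).mp hr
    rw [r.support_eq_cons] at hnd
    exact hnd.of_cons
  have hlen := path_length_eq_dist hT hap
  rw [SimpleGraph.Walk.length_append, hql, hrl] at hlen
  omega

lemma adj_dist_cases (hT : H.IsTree) {a b x : V} (h : H.Adj a b) :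
    H.dist x a = H.dist x b + 1 ∨ H.dist x b = H.dist x a + 1 := by
  obtain ⟨p, hp, hpl⟩ := hT.isConnected.exists_path_of_dist x a
  by_cases hb : b ∈ p.support
  · left
    have hsplit := dist_add_of_mem_support hT hp hb
    have h1 : H.dist b a = 1 := dist_eq_one_iff_adj.mpr h.symm
    omega
  · right
    have hb' : b ∉ p.reverse.support := by
      rwa [SimpleGraph.Walk.support_reverse, List.mem_reverse]
    have hcons : (SimpleGraph.Walk.cons h.symm p.reverse).IsPath := hp.reverse.cons hb'
    have hlen := path_length_eq_dist hT hcons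
    rw [SimpleGraph.Walk.length_cons, SimpleGraph.Walk.length_reverse, hpl] at hlen
    rw [H.dist_comm (u := x) (v := b)]
    omega


section Fin

variable [Fintype V] [DecidableRel H.Adj]

lemma neighborFinset_nonempty' (hT : H.IsTree) (hcard : 2 < Fintype.card V) (v : V) :
    (H.neighborFinset v).Nonempty := by
  obtain ⟨z, hz⟩ := Fintype.exists_ne_of_one_lt_card (by omega) v
  obtain ⟨u, hu, -⟩ := exists_branch hT hz
  exact ⟨u, (H.mem_neighborFinset v u).mpr hu⟩

lemma sup_Ve_eq (hT : H.IsTree) (hcard : 2 < Fintype.card V)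
    (Ve : Finset V) (hmin : ∀ w : V, H.degree w ≤ 1 → w ∈ Ve) (x : V) :
    Ve.sup (H.dist x) = Finset.univ.sup (H.dist x) := by
  refine le_antisymm (Finset.sup_mono (Finset.subset_univ _)) ?_
  have hne : Nonempty V := Fintype.card_pos_iff.mp (by omega)
  obtain ⟨y0, -, hy0⟩ := Finset.exists_mem_eq_sup Finset.univ Finset.univ_nonempty (H.dist x)
  rw [hy0]
  by_cases hy0Ve : y0 ∈ Ve
  · exact Finset.le_sup hy0Ve
  exfalso
  have hdeg : 2 ≤ H.degree y0 := by
    by_contra hd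
    exact hy0Ve (hmin y0 (by omega))
  have hxy0 : x ≠ y0 := by
    rintro rfl
    obtain ⟨z, hz⟩ := Fintype.exists_ne_of_one_lt_card (by omega) x
    have h1 : H.dist x z ≤ Finset.univ.sup (H.dist x) := Finset.le_sup (Finset.mem_univ z)
    rw [hy0, SimpleGraph.dist_self] at h1
    have h2 := hT.isConnected.pos_dist_of_ne (Ne.symm hz)
    omega
  have hcards : 1 < (H.neighborFinset y0).card := by
    rw [H.card_neighborFinset_eq_degree]; omega
  obtain ⟨w1, hw1, w2, hw2, hww⟩ := Finset.one_lt_card.mp hcards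
  have ha1 : H.Adj y0 w1 := (H.mem_neighborFinset y0 w1).mp hw1
  have ha2 : H.Adj y0 w2 := (H.mem_neighborFinset y0 w2).mp hw2
  have key : ∀ w : V, H.Adj y0 w → H.dist y0 x = H.dist w x + 1 := by
    intro w hw
    rcases adj_dist_cases hT (x := x) hw with hc | hc
    · rw [H.dist_comm (u := y0), H.dist_comm (u := w)]; omega
    · have hle : H.dist x w ≤ Finset.univ.sup (H.dist x) := Finset.le_sup (Finset.mem_univ w)
      rw [hy0] at hle
      omega
  exact hww (branch_unique hT ha1 ha2 (key w1 ha1) (key w2 ha2))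

lemma ecc_eq_sup_pathLen (hT : H.IsTree) (hcard : 2 < Fintype.card V) (v : V) :
    Finset.univ.sup (H.dist v) = (H.neighborFinset v).sup (pathLenFrom H v) := by
  refine le_antisymm (Finset.sup_le fun y _ => ?_) (Finset.sup_le fun u hu => ?_)
  · by_cases hyv : y = v
    · simp [hyv, SimpleGraph.dist_self]
    obtain ⟨u, hadj, hbr⟩ := exists_branch hT hyv
    have hmemf : y ∈ Finset.univ.filter (fun x : V => H.dist v x = H.dist u x + 1) := by
      simp [hbr]
    have hle : H.dist u y ≤
        (Finset.univ.filter (fun x : V => H.dist v x = H.dist u x + 1)).sup (H.dist u) :=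
      Finset.le_sup hmemf
    have hfin : pathLenFrom H v u ≤ (H.neighborFinset v).sup (pathLenFrom H v) :=
      Finset.le_sup ((H.mem_neighborFinset v u).mpr hadj)
    rw [pathLenFrom] at hfin
    omega
  · have hadj : H.Adj v u := (H.mem_neighborFinset v u).mp hu
    have humem : u ∈ Finset.univ.filter (fun x : V => H.dist v x = H.dist u x + 1) := by
      simp [dist_eq_one_iff_adj.mpr hadj, SimpleGraph.dist_self]
    obtain ⟨y, hymem, hysup⟩ := Finset.exists_mem_eq_sup _ ⟨u, humem⟩ (H.dist u)
    have hy : H.dist v y = H.dist u y + 1 := by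
      simpa using (Finset.mem_filter.mp hymem).2
    have : H.dist v y ≤ Finset.univ.sup (H.dist v) := Finset.le_sup (Finset.mem_univ y)
    rw [pathLenFrom, ← hysup] at *
    omega

end Fin

end JordanAux

/-- Let `H` be a finite tree on more than two vertices that is the minimal
connected subtree spanning a nonempty vertex set `Ve` (equivalently, every leaf of `H` is in
`Ve`). A vertex `v` is a Jordan center of `Ve` if and only if (i) `v` has degree at least 2 in
`H`, and (ii) the difference between the largest and the second largest values among
`{ℓ_u : u a neighbor of v in H}` is at most 1. -/
theorem Jordan_center_iff_degree_two_and_balanced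
    {V : Type*} [Fintype V] [DecidableEq V] (H : SimpleGraph V) [DecidableRel H.Adj]
    (hT : H.IsTree) (hcard : 2 < Fintype.card V)
    (Ve : Finset V) (hVe : Ve.Nonempty)
    (hmin : ∀ w : V, H.degree w ≤ 1 → w ∈ Ve)
    (v : V) :
    (∀ x : V, Ve.sup (H.dist v) ≤ Ve.sup (H.dist x)) ↔
      (2 ≤ H.degree v ∧
        ∃ u₀ ∈ H.neighborFinset v,
          (∀ u ∈ H.neighborFinset v, pathLenFrom H v u ≤ pathLenFrom H v u₀) ∧
          pathLenFrom H v u₀ ≤ ((H.neighborFinset v).erase u₀).sup (pathLenFrom H v) + 1) := by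

  classical
  have hconn := hT.isConnected
  have hV : Nonempty V := Fintype.card_pos_iff.mp (by omega)
  simp only [JordanAux.sup_Ve_eq hT hcard Ve hmin]
  constructor
  · intro hcenter
    have hnbne := JordanAux.neighborFinset_nonempty' hT hcard v
    have hdeg : 2 ≤ H.degree v := by
      by_contra hdle
      push_neg at hdle
      obtain ⟨u, hu⟩ := hnbne
      have hadj : H.Adj v u := (H.mem_neighborFinset v u).mp hu
      have hcard1 : (H.neighborFinset v).card ≤ 1 := by
        rw [H.card_neighborFinset_eq_degree]; omega
      have honly : ∀ w, H.Adj v w → w = u := fun w hw =>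
        Finset.card_le_one.mp hcard1 _ ((H.mem_neighborFinset v w).mpr hw) _ hu
      obtain ⟨y0, -, hy0⟩ := Finset.exists_mem_eq_sup Finset.univ Finset.univ_nonempty (H.dist u)
      by_cases hy0v : y0 = v
      · have hz : ∃ z : V, z ≠ v ∧ z ≠ u := by
          by_contra hno
          push_neg at hno
          have hsub : (Finset.univ : Finset V) ⊆ {v, u} := fun z _ => by
            rcases eq_or_ne z v with rfl | h
            · simp
            · simp [hno z h]
          have hle := Finset.card_le_card hsub
          have hle2 := Finset.card_insert_le v ({u} : Finset V)
          rw [Finset.card_univ] at hle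
          rw [Finset.card_singleton] at hle2
          omega
        obtain ⟨z, hzv, hzu⟩ := hz
        obtain ⟨w, hw, hbr⟩ := JordanAux.exists_branch hT hzv
        have hwu : w = u := honly w hw
        subst hwu
        have hdz : 1 ≤ H.dist w z := hconn.pos_dist_of_ne (Ne.symm hzu)
        have h1 : H.dist v z ≤ Finset.univ.sup (H.dist v) := Finset.le_sup (Finset.mem_univ z)
        have h2 : Finset.univ.sup (H.dist w) = 1 := by
          rw [hy0, hy0v]
          exact dist_eq_one_iff_adj.mpr hadj.symm
        have h3 := hcenter w
        rw [h2] at h3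
        omega
      · obtain ⟨w, hw, hbr⟩ := JordanAux.exists_branch hT hy0v
        have hwu : w = u := honly w hw
        subst hwu
        have h1 : H.dist v y0 ≤ Finset.univ.sup (H.dist v) := Finset.le_sup (Finset.mem_univ y0)
        have h3 := hcenter w
        rw [hy0] at h3
        omega
    refine ⟨hdeg, ?_⟩
    obtain ⟨u₀, hu₀mem, hu₀sup⟩ := Finset.exists_mem_eq_sup _ hnbne (pathLenFrom H v)
    refine ⟨u₀, hu₀mem, fun u hu => hu₀sup ▸ Finset.le_sup hu, ?_⟩
    by_contra hbal
    push_neg at hbal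
    have hadj₀ : H.Adj v u₀ := (H.mem_neighborFinset v u₀).mp hu₀mem
    have heccv : Finset.univ.sup (H.dist v) = pathLenFrom H v u₀ := by
      rw [JordanAux.ecc_eq_sup_pathLen hT hcard v, hu₀sup]
    have key : ∀ y : V, H.dist u₀ y + 1 ≤ pathLenFrom H v u₀ := by
      intro y
      by_cases hyv : y = v
      · have hd1 : H.dist u₀ y = 1 := by
          rw [hyv]; exact dist_eq_one_iff_adj.mpr hadj₀.symm
        omega
      obtain ⟨u, hadju, hbr⟩ := JordanAux.exists_branch hT hyv
      by_cases huu : u = u₀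
      · subst huu
        have h1 : H.dist v y ≤ Finset.univ.sup (H.dist v) := Finset.le_sup (Finset.mem_univ y)
        rw [heccv] at h1
        omega
      · have hbr₀ : H.dist v u₀ = H.dist u₀ u₀ + 1 := by
          simp [SimpleGraph.dist_self, dist_eq_one_iff_adj.mpr hadj₀]
        have hsep := JordanAux.dist_eq_add_of_branches hT hadj₀ hadju (Ne.symm huu) hbr₀ hbr
        have hd1 : H.dist u₀ v = 1 := dist_eq_one_iff_adj.mpr hadj₀.symm
        have hmemf : y ∈ Finset.univ.filter (fun z : V => H.dist v z = H.dist u z + 1) := by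
          simp [hbr]
        have hle : H.dist u y ≤
            (Finset.univ.filter (fun z : V => H.dist v z = H.dist u z + 1)).sup (H.dist u) :=
          Finset.le_sup hmemf
        have hus : pathLenFrom H v u ≤ ((H.neighborFinset v).erase u₀).sup (pathLenFrom H v) :=
          Finset.le_sup (Finset.mem_erase.mpr ⟨huu, (H.mem_neighborFinset v u).mpr hadju⟩)
        rw [pathLenFrom] at hus
        omega
    obtain ⟨y0, -, hy0⟩ := Finset.exists_mem_eq_sup Finset.univ Finset.univ_nonempty (H.dist u₀)
    have h3 := hcenter u₀
    rw [heccv, hy0] at h3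
    have h4 := key y0
    omega
  · rintro ⟨hdeg, u₀, hu₀mem, hmax, hbal⟩ x
    have hadj₀ : H.Adj v u₀ := (H.mem_neighborFinset v u₀).mp hu₀mem
    have heccv : Finset.univ.sup (H.dist v) = pathLenFrom H v u₀ := by
      rw [JordanAux.ecc_eq_sup_pathLen hT hcard v]
      exact le_antisymm (Finset.sup_le hmax) (Finset.le_sup hu₀mem)
    rw [heccv]
    by_cases hxv : x = v
    · subst hxv
      exact heccv.ge
    obtain ⟨u, hadju, hbru⟩ := JordanAux.exists_branch hT hxv
    have hchoice : ∃ u', H.Adj v u' ∧ u' ≠ u ∧ pathLenFrom H v u₀ ≤ pathLenFrom H v u' + 1 := by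
      by_cases huu : u = u₀
      · subst huu
        have hnee : ((H.neighborFinset v).erase u).Nonempty := by
          have hc : 2 ≤ (H.neighborFinset v).card := by
            rw [H.card_neighborFinset_eq_degree]; omega
          apply Finset.card_pos.mp
          rw [Finset.card_erase_of_mem hu₀mem]
          omega
        obtain ⟨u', hu'mem, hu'sup⟩ := Finset.exists_mem_eq_sup _ hnee (pathLenFrom H v)
        obtain ⟨hu'ne, hu'nb⟩ := Finset.mem_erase.mp hu'mem
        exact ⟨u', (H.mem_neighborFinset v u').mp hu'nb, hu'ne, by rw [← hu'sup]; exact hbal⟩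
      · exact ⟨u₀, hadj₀, Ne.symm huu, Nat.le_succ _⟩
    obtain ⟨u', hadj', hne', hℓ⟩ := hchoice
    have hu'memf : u' ∈ Finset.univ.filter (fun z : V => H.dist v z = H.dist u' z + 1) := by
      simp [dist_eq_one_iff_adj.mpr hadj', SimpleGraph.dist_self]
    obtain ⟨y, hymem, hysup⟩ := Finset.exists_mem_eq_sup _ ⟨u', hu'memf⟩ (H.dist u')
    have hy : H.dist v y = H.dist u' y + 1 := by
      simpa using (Finset.mem_filter.mp hymem).2
    have hℓ' : pathLenFrom H v u' = H.dist v y := by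
      rw [pathLenFrom]; omega
    have hsep := JordanAux.dist_eq_add_of_branches hT hadju hadj' (Ne.symm hne') hbru hy
    have hxvpos : 1 ≤ H.dist x v := hconn.pos_dist_of_ne hxv
    have h1 : H.dist x y ≤ Finset.univ.sup (H.dist x) := Finset.le_sup (Finset.mem_univ y)
    omega
end
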